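/- arXiv:1603.03950 — 4 statements merged into one kernel-verified Lean document; each statement's English description precedes it below -/
import Mathlib

section
/- Let θ, q ∈ ℝ. Then ∫_ℝ e^{θ v} φ(v) Φ(q v) dv = e^{θ²/2} Φ(θ q / √(q² + 1)), where the integral is with respect to Lebesgue measure on ℝ. -/
open MeasureTheory Filter Set

/-- The standard normal density `φ`. -/
noncomputable def stdNormalPDF (x : ℝ) : ℝ :=
  Real.exp (-x ^ 2 / 2) / Real.sqrt (2 * Real.pi)

/-- The standard normal cumulative distribution function `Φ`. -/
noncomputable def stdNormalCDF (x : ℝ) : ℝ :=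
  ∫ t in Set.Iic x, stdNormalPDF t

lemma pdf_nonneg (x : ℝ) : 0 ≤ stdNormalPDF x :=
  div_nonneg (Real.exp_nonneg _) (Real.sqrt_nonneg _)

lemma pdf_neg (x : ℝ) : stdNormalPDF (-x) = stdNormalPDF x := by
  simp [stdNormalPDF, neg_sq]

lemma pdf_le (x : ℝ) : stdNormalPDF x ≤ (Real.sqrt (2 * Real.pi))⁻¹ := by
  rw [stdNormalPDF, div_eq_mul_inv]
  have h1 : Real.exp (-x ^ 2 / 2) ≤ 1 := by
    rw [Real.exp_le_one_iff]; nlinarith [sq_nonneg x]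
  have h2 : (0:ℝ) ≤ (Real.sqrt (2 * Real.pi))⁻¹ := by positivity
  nlinarith

lemma pdf_integrable : Integrable stdNormalPDF := by
  have h : stdNormalPDF = fun x => (Real.exp (-(2⁻¹ : ℝ) * x ^ 2)) * (Real.sqrt (2 * Real.pi))⁻¹ := by
    funext x
    rw [stdNormalPDF, div_eq_mul_inv]
    ring_nf
  rw [h]
  exact (integrable_exp_neg_mul_sq (by norm_num)).mul_const _

lemma pdf_integral : ∫ x, stdNormalPDF x = 1 := by
  have h : ∀ x : ℝ, stdNormalPDF x = (Real.exp (-(2⁻¹ : ℝ) * x ^ 2)) / (Real.sqrt (2 * Real.pi)) := by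
    intro x; rw [stdNormalPDF]; ring_nf
  simp_rw [h, MeasureTheory.integral_div, integral_gaussian]
  rw [div_eq_one_iff_eq (by positivity)]
  rw [show (Real.pi / 2⁻¹) = 2 * Real.pi by ring]

lemma pdf_continuous : Continuous stdNormalPDF := by
  unfold stdNormalPDF; fun_prop

lemma cdf_mono : Monotone stdNormalCDF := by
  intro a b hab
  exact setIntegral_mono_set pdf_integrable.integrableOn
    (Eventually.of_forall fun x => pdf_nonneg x) (HasSubset.Subset.eventuallyLE (Iic_subset_Iic.2 hab))

lemma cdf_nonneg (x : ℝ) : 0 ≤ stdNormalCDF x :=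
  integral_nonneg fun t => pdf_nonneg t

lemma cdf_le_one (x : ℝ) : stdNormalCDF x ≤ 1 := by
  rw [← pdf_integral]
  exact setIntegral_le_integral pdf_integrable (Eventually.of_forall fun t => pdf_nonneg t)

lemma cdf_sub (a b : ℝ) : stdNormalCDF b - stdNormalCDF a = ∫ x in a..b, stdNormalPDF x :=
  intervalIntegral.integral_Iic_sub_Iic pdf_integrable.integrableOn pdf_integrable.integrableOn

lemma cdf_neg (x : ℝ) : stdNormalCDF (-x) = 1 - stdNormalCDF x := by
  have h1 : stdNormalCDF x + ∫ t in Ioi x, stdNormalPDF t = 1 := by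
    rw [stdNormalCDF, intervalIntegral.integral_Iic_add_Ioi pdf_integrable.integrableOn
      pdf_integrable.integrableOn, pdf_integral]
  have h2 : stdNormalCDF (-x) = ∫ t in Ioi x, stdNormalPDF t := by
    rw [stdNormalCDF]
    calc (∫ t in Iic (-x), stdNormalPDF t) = ∫ t in Iic (-x), stdNormalPDF (-t) := by
          simp_rw [pdf_neg]
      _ = ∫ t in Ioi x, stdNormalPDF t := by rw [integral_comp_neg_Iic]; norm_num
  linarith

lemma cdf_zero : stdNormalCDF 0 = 1/2 := by
  have := cdf_neg 0; rw [neg_zero] at this; linarith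

lemma pdf_key (q t u r : ℝ) (hr0 : 0 < r) (hr : r ^ 2 = q ^ 2 + 1) :
    stdNormalPDF u * stdNormalPDF (q * u + t)
      = stdNormalPDF (r * u + q * t / r) * stdNormalPDF (t / r) := by
  unfold stdNormalPDF
  rw [div_mul_div_comm, div_mul_div_comm, ← Real.exp_add, ← Real.exp_add]
  congr 2
  have h : r ≠ 0 := hr0.ne'
  field_simp
  linear_combination (u^2*r^2 - t^2) * hr

lemma integral_pdf_affine (r b : ℝ) (hr : 0 < r) :
    ∫ u : ℝ, stdNormalPDF (r * u + b) = 1 / r := by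
  have h1 : (∫ u : ℝ, stdNormalPDF (r * u + b))
      = ∫ u : ℝ, (fun y => stdNormalPDF (y + b)) (r * u) := by rfl
  rw [h1, MeasureTheory.Measure.integral_comp_mul_left (fun y => stdNormalPDF (y + b)) r,
    integral_add_right_eq_self, pdf_integral]
  rw [abs_of_pos (inv_pos.2 hr)]
  simp [one_div]

lemma integral_pdf_mul_pdf (q t r : ℝ) (hr0 : 0 < r) (hr : r ^ 2 = q ^ 2 + 1) :
    ∫ u : ℝ, stdNormalPDF u * stdNormalPDF (q * u + t) = stdNormalPDF (t / r) / r := by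
  simp_rw [pdf_key q t _ r hr0 hr]
  rw [integral_mul_const, integral_pdf_affine r (q * t / r) hr0]
  ring

lemma cdf_measurable : Measurable stdNormalCDF := cdf_mono.measurable

lemma int_pdf_mul_cdf (q c : ℝ) :
    Integrable (fun u => stdNormalPDF u * stdNormalCDF (q * u + c)) := by
  simp_rw [mul_comm (stdNormalPDF _)]
  refine Integrable.bdd_mul pdf_integrable ?_ (c := 1) (Eventually.of_forall fun u => ?_)
  · exact (cdf_measurable.comp (by fun_prop)).aestronglyMeasurable
  · rw [Real.norm_eq_abs, abs_of_nonneg (cdf_nonneg _)]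
    exact cdf_le_one _

lemma integral_pdf_mul_cdf_zero (q : ℝ) :
    ∫ u : ℝ, stdNormalPDF u * stdNormalCDF (q * u) = 1 / 2 := by
  set S := ∫ u : ℝ, stdNormalPDF u * stdNormalCDF (q * u) with hS
  have h1 : S = ∫ u : ℝ, stdNormalPDF u * (1 - stdNormalCDF (q * u)) := by
    calc S = ∫ u : ℝ, stdNormalPDF (-u) * stdNormalCDF (q * (-u)) := by
          rw [integral_neg_eq_self (fun u => stdNormalPDF u * stdNormalCDF (q * u)) volume]
      _ = ∫ u : ℝ, stdNormalPDF u * (1 - stdNormalCDF (q * u)) := by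
          congr 1; funext u
          rw [pdf_neg, mul_neg, cdf_neg]
  have h2 : ∫ u : ℝ, stdNormalPDF u * (1 - stdNormalCDF (q * u)) = 1 - S := by
    have hint : Integrable (fun u => stdNormalPDF u * stdNormalCDF (q * u)) := by
      have := int_pdf_mul_cdf q 0
      simpa using this
    simp_rw [mul_sub, mul_one]
    rw [integral_sub pdf_integrable hint, pdf_integral, hS]
  linarith [h1.trans h2]

lemma fubini_swap (q a b : ℝ) :
    ∫ u : ℝ, stdNormalPDF u * ∫ t in Ioc a b, stdNormalPDF (q * u + t)
      = ∫ t in Ioc a b, ∫ u : ℝ, stdNormalPDF u * stdNormalPDF (q * u + t) := by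
  have hmeas : AEStronglyMeasurable
      (fun p : ℝ × ℝ => stdNormalPDF p.1 * stdNormalPDF (q * p.1 + p.2))
      (volume.prod (volume.restrict (Ioc a b))) := by
    apply Continuous.aestronglyMeasurable
    simp only [stdNormalPDF]
    fun_prop
  have hdom : Integrable (fun p : ℝ × ℝ => stdNormalPDF p.1 * (Real.sqrt (2 * Real.pi))⁻¹)
      (volume.prod (volume.restrict (Ioc a b))) := by
    have hconst : Integrable (fun _ : ℝ => (Real.sqrt (2 * Real.pi))⁻¹)
        (volume.restrict (Ioc a b)) := by
      rw [← IntegrableOn]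
      exact integrableOn_const measure_Ioc_lt_top.ne
    exact pdf_integrable.mul_prod hconst
  have hint : Integrable (Function.uncurry
      (fun u t => stdNormalPDF u * stdNormalPDF (q * u + t)))
      (volume.prod (volume.restrict (Ioc a b))) := by
    refine hdom.mono hmeas (Eventually.of_forall fun p => ?_)
    obtain ⟨u, t⟩ := p
    simp only [Function.uncurry_apply_pair, Real.norm_eq_abs,
      abs_of_nonneg (mul_nonneg (pdf_nonneg _) (pdf_nonneg _)),
      abs_of_nonneg (mul_nonneg (pdf_nonneg u) (by positivity : (0:ℝ) ≤ (Real.sqrt (2 * Real.pi))⁻¹))]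
    exact mul_le_mul_of_nonneg_left (pdf_le _) (pdf_nonneg _)
  have := MeasureTheory.integral_integral_swap hint
  simp_rw [integral_const_mul] at this
  exact this

lemma integral_pdf_mul_cdf (q c r : ℝ) (hr0 : 0 < r) (hr : r ^ 2 = q ^ 2 + 1) :
    ∫ u : ℝ, stdNormalPDF u * stdNormalCDF (q * u + c) = stdNormalCDF (c / r) := by
  have hsub : ∀ u : ℝ, stdNormalCDF (q * u + c) - stdNormalCDF (q * u)
      = ∫ t in (0:ℝ)..c, stdNormalPDF (q * u + t) := by
    intro u
    rw [cdf_sub, intervalIntegral.integral_comp_add_left stdNormalPDF (q * u), add_zero]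
  have step1 : (∫ u : ℝ, stdNormalPDF u * stdNormalCDF (q * u + c))
      - (∫ u : ℝ, stdNormalPDF u * stdNormalCDF (q * u))
      = ∫ u : ℝ, stdNormalPDF u * ∫ t in (0:ℝ)..c, stdNormalPDF (q * u + t) := by
    have hint0 : Integrable (fun u => stdNormalPDF u * stdNormalCDF (q * u)) := by
      have := int_pdf_mul_cdf q 0; simpa using this
    rw [← integral_sub (int_pdf_mul_cdf q c) hint0]
    congr 1; funext u
    rw [← mul_sub, hsub u]
  have step2 : (∫ u : ℝ, stdNormalPDF u * ∫ t in (0:ℝ)..c, stdNormalPDF (q * u + t))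
      = ∫ t in (0:ℝ)..c, stdNormalPDF (t / r) / r := by
    rcases le_total 0 c with h | h
    · simp_rw [intervalIntegral.integral_of_le h]
      rw [fubini_swap]
      exact setIntegral_congr_fun measurableSet_Ioc
        fun t _ => integral_pdf_mul_pdf q t r hr0 hr
    · simp_rw [intervalIntegral.integral_of_ge h, mul_neg, integral_neg]
      rw [fubini_swap]
      congr 1
      exact setIntegral_congr_fun measurableSet_Ioc
        fun t _ => integral_pdf_mul_pdf q t r hr0 hr
  have step3 : (∫ t in (0:ℝ)..c, stdNormalPDF (t / r) / r)
      = stdNormalCDF (c / r) - stdNormalCDF 0 := by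
    rw [intervalIntegral.integral_div, intervalIntegral.integral_comp_div
      (fun x => stdNormalPDF x) hr0.ne', zero_div, smul_eq_mul]
    rw [cdf_sub]
    field_simp
  have h0 := integral_pdf_mul_cdf_zero q
  have hcdf0 := cdf_zero
  linarith [step1, step2 ▸ step1, step3]

theorem integral_exp_mul_stdNormalPDF_mul_stdNormalCDF (θ q : ℝ) :
    ∫ v : ℝ, Real.exp (θ * v) * stdNormalPDF v * stdNormalCDF (q * v) =
      Real.exp (θ ^ 2 / 2) * stdNormalCDF (θ * q / Real.sqrt (q ^ 2 + 1)) := by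
  set r := Real.sqrt (q ^ 2 + 1) with hrdef
  have hr0 : 0 < r := Real.sqrt_pos.2 (by positivity)
  have hr : r ^ 2 = q ^ 2 + 1 := Real.sq_sqrt (by positivity)
  have hshift : (∫ v : ℝ, Real.exp (θ * v) * stdNormalPDF v * stdNormalCDF (q * v))
      = ∫ u : ℝ, Real.exp (θ * (u + θ)) * stdNormalPDF (u + θ) * stdNormalCDF (q * (u + θ)) := by
    rw [integral_add_right_eq_self
      (fun v => Real.exp (θ * v) * stdNormalPDF v * stdNormalCDF (q * v)) θ]
  have hpt : ∀ u : ℝ, Real.exp (θ * (u + θ)) * stdNormalPDF (u + θ) * stdNormalCDF (q * (u + θ))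
      = Real.exp (θ ^ 2 / 2) * (stdNormalPDF u * stdNormalCDF (q * u + q * θ)) := by
    intro u
    have h1 : Real.exp (θ * (u + θ)) * stdNormalPDF (u + θ)
        = Real.exp (θ ^ 2 / 2) * stdNormalPDF u := by
      have hx : Real.exp (θ * (u + θ)) * Real.exp (-(u + θ) ^ 2 / 2)
          = Real.exp (θ ^ 2 / 2) * Real.exp (-u ^ 2 / 2) := by
        rw [← Real.exp_add, ← Real.exp_add]
        congr 1
        ring
      unfold stdNormalPDF
      rw [← mul_div_assoc, ← mul_div_assoc, hx]
    rw [show q * (u + θ) = q * u + q * θ by ring, h1, mul_assoc]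
  rw [hshift]
  simp_rw [hpt]
  rw [integral_const_mul, integral_pdf_mul_cdf q (q * θ) r hr0 hr, mul_comm q θ]
end

section
/- Let Z be a standard normal random variable and E₀, E₁ independent random variables with the exponential distribution of rate 1, with (Z, E₀, E₁) mutually independent, let α₀, α > 0 with α₀ ≠ α, and set W = Z + α₀·E₀ + α·E₁ with cdf F_W(z) = P(W ≤ z). Fix x > 0, let α* = max(α₀, α) and c = 0.5/α* + α*·log(α*/|α₀ − α|) − α*·log x. Then n·(1 − F_W(c + α*·log n)) → x as n → ∞. -/
open MeasureTheory ProbabilityTheory Filter Set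
open scoped ENNReal NNReal

/-- The exponential distribution of rate 1 on `ℝ`: density `e^{-x}` on `[0, ∞)`, `0` elsewhere. -/
noncomputable def expMeasure1 : Measure ℝ :=
  volume.withDensity fun x => ENNReal.ofReal (if 0 ≤ x then Real.exp (-x) else 0)

namespace TailAux

lemma density_eq : (fun x => ENNReal.ofReal (if 0 ≤ x then Real.exp (-x) else 0))
    = Set.indicator (Ici 0) (fun x => ENNReal.ofReal (Real.exp (-x))) := by
  funext x; by_cases h : 0 ≤ x <;> simp [Set.indicator, h]

lemma measurable_density :
    Measurable (fun x => ENNReal.ofReal (if 0 ≤ x then Real.exp (-x) else 0)) := by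
  apply Measurable.ennreal_ofReal
  exact Measurable.ite measurableSet_Ici (Real.measurable_exp.comp measurable_neg) measurable_const

lemma exp1_tail (r : ℝ) : expMeasure1 (Ioi r) = ENNReal.ofReal (Real.exp (-(max r 0))) := by
  rw [expMeasure1, withDensity_apply _ measurableSet_Ioi, density_eq,
    ]
  rw [show lintegral (volume.restrict (Ioi r)) ((Ici 0).indicator fun x => ENNReal.ofReal (Real.exp (-x)))
      = ∫⁻ x, (Ici 0).indicator (fun x => ENNReal.ofReal (Real.exp (-x))) x ∂(volume.restrict (Ioi r)) from rfl,
    lintegral_indicator measurableSet_Ici _, Measure.restrict_restrict measurableSet_Ici]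
  have key : ∀ m : ℝ, ∫⁻ x in Ioi m, ENNReal.ofReal (Real.exp (-x)) ∂volume
      = ENNReal.ofReal (Real.exp (-m)) := by
    intro m
    rw [← ofReal_integral_eq_lintegral_ofReal]
    · rw [integral_exp_neg_Ioi]
    · simpa [IntegrableOn] using exp_neg_integrableOn_Ioi m one_pos
    · filter_upwards with y using (Real.exp_pos _).le
  rcases le_or_gt 0 r with h | h
  · have hset : Ici (0:ℝ) ∩ Ioi r = Ioi r := by
      apply inter_eq_right.2; intro y hy; exact le_trans h (le_of_lt hy)
    rw [hset, max_eq_left h, key]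
  · have hset : Ici (0:ℝ) ∩ Ioi r = Ici 0 := by
      apply inter_eq_left.2; intro y hy; exact lt_of_lt_of_le h hy
    rw [hset, max_eq_right h.le,
      setLIntegral_congr (Ioi_ae_eq_Ici (a := (0:ℝ))).symm, key]

open Real in
lemma lintegral_exp_Ioi (m : ℝ) : ∫⁻ x in Ioi m, ENNReal.ofReal (Real.exp (-x)) ∂volume
    = ENNReal.ofReal (Real.exp (-m)) := by
  rw [← ofReal_integral_eq_lintegral_ofReal]
  · rw [integral_exp_neg_Ioi]
  · simpa [IntegrableOn] using exp_neg_integrableOn_Ioi m one_pos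
  · filter_upwards with y using (Real.exp_pos _).le

instance : IsProbabilityMeasure expMeasure1 := by
  constructor
  rw [expMeasure1, withDensity_apply _ MeasurableSet.univ, Measure.restrict_univ, density_eq]
  rw [show lintegral volume ((Ici 0).indicator fun x => ENNReal.ofReal (Real.exp (-x)))
      = ∫⁻ x, (Ici 0).indicator (fun x => ENNReal.ofReal (Real.exp (-x))) x ∂volume from rfl,
    lintegral_indicator measurableSet_Ici _,
    setLIntegral_congr (Ioi_ae_eq_Ici (a := (0:ℝ))).symm, lintegral_exp_Ioi]
  simp

section G

variable {α₀ α : ℝ} (hα₀ : 0 < α₀) (hα : 0 < α)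

/-- real tail integrand for the two-exponential sum -/
noncomputable def Ifun (α₀ α s : ℝ) : ℝ :=
  ∫ u in Ioi (0:ℝ), Real.exp (-u) * Real.exp (-(max ((s - α₀*u)/α) 0))

lemma integrand_le (s u : ℝ) :
    Real.exp (-u) * Real.exp (-(max ((s - α₀*u)/α) 0)) ≤ Real.exp (-u) := by
  nth_rewrite 2 [← mul_one (Real.exp (-u))]
  refine mul_le_mul_of_nonneg_left ?_ (Real.exp_pos _).le
  exact Real.exp_le_one_iff.2 (neg_nonpos.2 (le_max_right _ _))

lemma cont_integrand (s : ℝ) :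
    Continuous (fun u => Real.exp (-u) * Real.exp (-(max ((s - α₀*u)/α) 0))) := by
  fun_prop

lemma integrableOn_integrand (s : ℝ) :
    IntegrableOn (fun u => Real.exp (-u) * Real.exp (-(max ((s - α₀*u)/α) 0))) (Ioi 0) := by
  refine Integrable.mono (g := fun u => Real.exp (-u)) ?_ ?_ ?_
  · simpa [IntegrableOn] using exp_neg_integrableOn_Ioi 0 one_pos
  · exact (cont_integrand (α₀ := α₀) (α := α) s).aestronglyMeasurable.restrict
  · filter_upwards with u
    rw [Real.norm_eq_abs, Real.norm_eq_abs, abs_of_pos (by positivity), abs_of_pos (Real.exp_pos _)]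
    exact integrand_le s u

lemma Ifun_nonneg (s : ℝ) : 0 ≤ Ifun α₀ α s := by
  apply setIntegral_nonneg measurableSet_Ioi
  intro u _; positivity

include hα₀ hα in
lemma G_eq (s : ℝ) :
    (expMeasure1.prod expMeasure1) {q : ℝ × ℝ | s < α₀ * q.1 + α * q.2}
      = ENNReal.ofReal (Ifun α₀ α s) := by
  have hS : MeasurableSet {q : ℝ × ℝ | s < α₀ * q.1 + α * q.2} := by
    apply measurableSet_lt measurable_const; fun_prop
  rw [Measure.prod_apply hS]
  have hpre : ∀ u : ℝ, (Prod.mk u ⁻¹' {q : ℝ × ℝ | s < α₀ * q.1 + α * q.2})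
      = Ioi ((s - α₀*u)/α) := by
    intro u
    ext v
    simp only [mem_preimage, mem_setOf_eq, mem_Ioi]
    rw [div_lt_iff₀ hα, mul_comm]
    constructor <;> intro h <;> linarith
  simp_rw [hpre, exp1_tail]
  rw [expMeasure1, lintegral_withDensity_eq_lintegral_mul _ measurable_density (by fun_prop)]
  have hfg : (fun u => (ENNReal.ofReal (if 0 ≤ u then Real.exp (-u) else 0))
        * ENNReal.ofReal (Real.exp (-(max ((s - α₀*u)/α) 0))))
      = (Ici 0).indicator
        (fun u => ENNReal.ofReal (Real.exp (-u) * Real.exp (-(max ((s - α₀*u)/α) 0)))) := by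
    funext u
    by_cases h : 0 ≤ u
    · simp [Set.indicator, h, ENNReal.ofReal_mul (Real.exp_pos (-u)).le]
    · simp [Set.indicator, h]
  calc ∫⁻ u, (fun u => (ENNReal.ofReal (if 0 ≤ u then Real.exp (-u) else 0))
        * ENNReal.ofReal (Real.exp (-(max ((s - α₀*u)/α) 0)))) u ∂volume
      = ∫⁻ u, (Ici 0).indicator
        (fun u => ENNReal.ofReal (Real.exp (-u) * Real.exp (-(max ((s - α₀*u)/α) 0)))) u ∂volume := by
        rw [hfg]
    _ = ∫⁻ u in Ioi 0, ENNReal.ofReal (Real.exp (-u) * Real.exp (-(max ((s - α₀*u)/α) 0))) ∂volume := by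
        rw [lintegral_indicator measurableSet_Ici _,
          setLIntegral_congr (Ioi_ae_eq_Ici (a := (0:ℝ))).symm]
    _ = ENNReal.ofReal (Ifun α₀ α s) := by
        rw [← ofReal_integral_eq_lintegral_ofReal (integrableOn_integrand s)]
        · rfl
        · filter_upwards with u using by positivity

lemma int_exp_neg_mul {β : ℝ} (hβ : β ≠ 0) (b : ℝ) :
    ∫ u in (0:ℝ)..b, Real.exp (-(β*u)) = (1 - Real.exp (-(β*b)))/β := by
  have h : ∀ u : ℝ, Real.exp (-(β*u)) = Real.exp ((-β) * u) := by intro u; ring_nf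
  simp_rw [h]
  rw [intervalIntegral.integral_comp_mul_left Real.exp (neg_ne_zero.2 hβ), integral_exp]
  simp only [mul_zero, Real.exp_zero, smul_eq_mul]
  rw [eq_div_iff hβ, inv_neg]
  have hcan : β⁻¹ * β = 1 := inv_mul_cancel₀ hβ
  have harg : -β * b = -(β * b) := by ring
  rw [harg]
  linear_combination (1 - Real.exp (-(β * b))) * hcan

include hα₀ hα in
lemma Ifun_formula (hne : α₀ ≠ α) {s : ℝ} (hs : 0 < s) :
    Ifun α₀ α s = (α * Real.exp (-s/α) - α₀ * Real.exp (-s/α₀)) / (α - α₀) := by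
  have hb : 0 < s / α₀ := div_pos hs hα₀
  set b := s / α₀ with hbdef
  have hsplit : Ioc (0:ℝ) b ∪ Ioi b = Ioi 0 := Ioc_union_Ioi_eq_Ioi hb.le
  have hint := integrableOn_integrand (α₀ := α₀) (α := α) s
  rw [Ifun, ← hsplit, setIntegral_union (Ioc_disjoint_Ioi le_rfl) measurableSet_Ioi
    (hint.mono_set (by rw [← hsplit]; exact subset_union_left))
    (hint.mono_set (by rw [← hsplit]; exact subset_union_right))]
  have h1 : ∫ u in Ioc (0:ℝ) b, Real.exp (-u) * Real.exp (-(max ((s - α₀*u)/α) 0))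
      = Real.exp (-s/α) * ((1 - Real.exp (-(((α - α₀)/α) * b)))/((α - α₀)/α)) := by
    have hcongr : ∀ u ∈ Ioc (0:ℝ) b,
        Real.exp (-u) * Real.exp (-(max ((s - α₀*u)/α) 0))
          = Real.exp (-s/α) * Real.exp (-(((α - α₀)/α) * u)) := by
      intro u hu
      have hmax : max ((s - α₀*u)/α) 0 = (s - α₀*u)/α := by
        apply max_eq_left
        apply div_nonneg _ hα.le
        have : α₀ * u ≤ α₀ * b := mul_le_mul_of_nonneg_left hu.2 hα₀.le
        rw [hbdef, mul_div_cancel₀ _ hα₀.ne'] at this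
        linarith
      rw [hmax, ← Real.exp_add, ← Real.exp_add]
      congr 1
      field_simp
      ring
    rw [setIntegral_congr_fun measurableSet_Ioc hcongr, integral_const_mul,
      ← intervalIntegral.integral_of_le hb.le,
      int_exp_neg_mul (div_ne_zero (sub_ne_zero.2 (Ne.symm hne)) hα.ne') b]
  have h2 : ∫ u in Ioi b, Real.exp (-u) * Real.exp (-(max ((s - α₀*u)/α) 0))
      = Real.exp (-b) := by
    have hcongr : ∀ u ∈ Ioi b, Real.exp (-u) * Real.exp (-(max ((s - α₀*u)/α) 0))
        = Real.exp (-u) := by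
      intro u hu
      have hmax : max ((s - α₀*u)/α) 0 = 0 := by
        apply max_eq_right
        apply div_nonpos_of_nonpos_of_nonneg _ hα.le
        have : α₀ * b < α₀ * u := mul_lt_mul_of_pos_left hu hα₀
        rw [hbdef, mul_div_cancel₀ _ hα₀.ne'] at this
        linarith
      rw [hmax, neg_zero, Real.exp_zero, mul_one]
    rw [setIntegral_congr_fun measurableSet_Ioi hcongr, integral_exp_neg_Ioi]
  have hbs : Real.exp (-b) = Real.exp (-s/α₀) := by rw [hbdef]; congr 1; field_simp
  have hAE : Real.exp (-s/α) * Real.exp (-(((α - α₀)/α) * b)) = Real.exp (-s/α₀) := by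
    rw [← Real.exp_add]
    congr 1
    rw [hbdef]
    field_simp
    ring
  rw [h1, h2, hbs]
  set A := Real.exp (-s/α) with hA
  set B := Real.exp (-s/α₀) with hB
  set E := Real.exp (-(((α - α₀)/α) * b)) with hE
  have hαne : α - α₀ ≠ 0 := sub_ne_zero.2 (Ne.symm hne)
  have step : A * ((1 - E)/((α - α₀)/α)) = (α * A - α * (A * E))/(α - α₀) := by
    field_simp
  rw [step, hAE]
  field_simp
  ring

include hα₀ hα in
lemma K_ge_one (hne : α₀ ≠ α) : 1 ≤ max α₀ α / |α₀ - α| := by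
  rw [le_div_iff₀ (abs_pos.2 (sub_ne_zero.2 hne)), one_mul]
  rcases le_total α₀ α with h | h
  · rw [abs_of_nonpos (by linarith)]
    have := le_max_right α₀ α
    linarith
  · rw [abs_of_nonneg (by linarith)]
    have := le_max_left α₀ α
    linarith

include hα₀ hα in
lemma G_le (hne : α₀ ≠ α) (s : ℝ) :
    (expMeasure1.prod expMeasure1) {q : ℝ × ℝ | s < α₀ * q.1 + α * q.2}
      ≤ ENNReal.ofReal ((max α₀ α / |α₀ - α|) * Real.exp (-s / max α₀ α)) := by
  have hmaxpos : 0 < max α₀ α := lt_max_of_lt_left hα₀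
  rcases le_or_gt s 0 with h | h
  · refine le_trans prob_le_one ?_
    rw [ENNReal.one_le_ofReal]
    have h1 : (1:ℝ) ≤ Real.exp (-s / max α₀ α) := by
      rw [← Real.exp_zero]
      apply Real.exp_le_exp.2
      exact div_nonneg (neg_nonneg.2 h) hmaxpos.le
    nlinarith [K_ge_one hα₀ hα hne]
  · rw [G_eq hα₀ hα, Ifun_formula hα₀ hα hne h]
    apply ENNReal.ofReal_le_ofReal
    rcases lt_or_gt_of_ne hne with hlt | hlt
    · rw [max_eq_right hlt.le, abs_of_neg (by linarith), neg_sub, div_mul_eq_mul_div,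
        div_le_div_iff₀ (by linarith) (by linarith)]
      nlinarith [mul_nonneg (mul_nonneg hα₀.le (Real.exp_pos (-s/α₀)).le) (sub_pos.2 hlt).le]
    · rw [max_eq_left hlt.le, abs_of_pos (by linarith), div_mul_eq_mul_div]
      rw [show (α * Real.exp (-s/α) - α₀ * Real.exp (-s/α₀)) / (α - α₀)
          = (α₀ * Real.exp (-s/α₀) - α * Real.exp (-s/α)) / (α₀ - α) by
        rw [← neg_div_neg_eq]; ring_nf]
      rw [div_le_div_iff₀ (by linarith) (by linarith)]
      nlinarith [mul_nonneg (mul_nonneg hα.le (Real.exp_pos (-s/α)).le) (sub_pos.2 hlt).le]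

end G

section Gauss

open Real

lemma gauss_pointwise (b z : ℝ) :
    gaussianPDFReal 0 1 z * Real.exp (b * z)
      = Real.exp (b^2/2) * gaussianPDFReal b 1 z := by
  rw [gaussianPDFReal_def, gaussianPDFReal_def]
  simp only [NNReal.coe_one, mul_one, sub_zero]
  rw [mul_assoc, ← Real.exp_add, mul_comm (Real.exp (b^2/2)), mul_assoc, ← Real.exp_add]
  congr 1
  ring

lemma gauss_lintegral_exp (b : ℝ) :
    ∫⁻ z, ENNReal.ofReal (Real.exp (b * z)) ∂(gaussianReal 0 1)
      = ENNReal.ofReal (Real.exp (b^2/2)) := by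
  rw [gaussianReal_of_var_ne_zero 0 one_ne_zero,
    lintegral_withDensity_eq_lintegral_mul _ (measurable_gaussianPDF 0 1) (by fun_prop)]
  have heq : ∀ z, (gaussianPDF 0 1 * fun z => ENNReal.ofReal (Real.exp (b * z))) z
      = ENNReal.ofReal (Real.exp (b^2/2)) * gaussianPDF b 1 z := by
    intro z
    simp only [Pi.mul_apply, gaussianPDF_def]
    rw [← ENNReal.ofReal_mul (gaussianPDFReal_nonneg 0 1 z),
      ← ENNReal.ofReal_mul (Real.exp_pos _).le, gauss_pointwise]
  simp_rw [heq]
  rw [lintegral_const_mul _ (measurable_gaussianPDF b 1), lintegral_gaussianPDF_eq_one b one_ne_zero,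
    mul_one]

lemma gauss_integrable_exp (b : ℝ) :
    Integrable (fun z => Real.exp (b * z)) (gaussianReal 0 1) := by
  constructor
  · exact Continuous.aestronglyMeasurable (by fun_prop)
  · show ∫⁻ z, (‖Real.exp (b * z)‖₊ : ℝ≥0∞) ∂(gaussianReal 0 1) < ⊤
    calc ∫⁻ z, (‖Real.exp (b * z)‖₊ : ℝ≥0∞) ∂(gaussianReal 0 1)
        = ∫⁻ z, ENNReal.ofReal (Real.exp (b * z)) ∂(gaussianReal 0 1) := by
          congr 1; funext z; rw [← Real.enorm_eq_ofReal (Real.exp_pos _).le, enorm_eq_nnnorm]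
      _ = ENNReal.ofReal (Real.exp (b^2/2)) := gauss_lintegral_exp b
      _ < ⊤ := ENNReal.ofReal_lt_top

lemma gauss_integral_exp (b : ℝ) :
    ∫ z, Real.exp (b * z) ∂(gaussianReal 0 1) = Real.exp (b^2/2) := by
  rw [integral_eq_lintegral_of_nonneg_ae
      (Filter.Eventually.of_forall fun z => (Real.exp_pos _).le)
      (Continuous.aestronglyMeasurable (by fun_prop)),
    gauss_lintegral_exp b, ENNReal.toReal_ofReal (Real.exp_pos _).le]

end Gauss

end TailAux

section Main

open TailAux

set_option maxHeartbeats 1000000 in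
theorem tail_limit_normal_plus_two_exponentials
    {Ω : Type*} [MeasureSpace Ω] [IsProbabilityMeasure (ℙ : Measure Ω)]
    (Z E₀ E₁ : Ω → ℝ) (hZ : Measurable Z) (hE₀ : Measurable E₀) (hE₁ : Measurable E₁)
    (hlawZ : Measure.map Z ℙ = gaussianReal 0 1)
    (hlawE₀ : Measure.map E₀ ℙ = expMeasure1)
    (hlawE₁ : Measure.map E₁ ℙ = expMeasure1)
    (hindep : iIndepFun ![Z, E₀, E₁] ℙ)
    (α₀ α : ℝ) (hα₀ : 0 < α₀) (hα : 0 < α) (hne : α₀ ≠ α)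
    (x : ℝ) (hx : 0 < x)
    (αs c : ℝ) (hαs : αs = max α₀ α)
    (hc : c = 0.5 / αs + αs * Real.log (αs / |α₀ - α|) - αs * Real.log x) :
    Tendsto (fun n : ℕ =>
        (n : ℝ) *
          (1 - (ℙ {ω | Z ω + α₀ * E₀ ω + α * E₁ ω ≤ c + αs * Real.log n}).toReal))
      atTop (nhds x) := by
  have hαspos : 0 < αs := hαs ▸ lt_max_of_lt_left hα₀
  have habs : (0:ℝ) < |α₀ - α| := abs_pos.2 (sub_ne_zero.2 hne)
  set γ := gaussianReal 0 1 with hγ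
  set ν := expMeasure1.prod expMeasure1 with hν
  set K := αs / |α₀ - α| with hK
  have hKpos : 0 < K := div_pos hαspos habs
  -- the tail function of the two-exponential part
  set w : ℝ → ℝ≥0∞ := fun s => ν {q : ℝ × ℝ | s < α₀ * q.1 + α * q.2} with hw
  have hU : MeasurableSet {p : ℝ × (ℝ × ℝ) | p.1 < α₀ * p.2.1 + α * p.2.2} := by
    apply measurableSet_lt (by fun_prop) (by fun_prop)
  have hwmeas : Measurable w := by
    have h := measurable_measure_prodMk_left (ν := ν)
      (s := {p : ℝ × (ℝ × ℝ) | p.1 < α₀ * p.2.1 + α * p.2.2}) hU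
    exact h
  have hwle : ∀ s, w s ≤ ENNReal.ofReal (K * Real.exp (-s / αs)) := by
    intro s
    rw [hK, hαs]
    exact G_le hα₀ hα hne s
  have hwle1 : ∀ s, w s ≤ 1 := fun s => prob_le_one
  -- independence structure
  have hm : ∀ i, Measurable (![Z, E₀, E₁] i) := by
    intro i; fin_cases i <;> simpa
  have hEE : IndepFun E₀ E₁ ℙ := by
    have h := hindep.indepFun (i := 1) (j := 2) (by decide)
    simpa using h
  have hpairlaw : Measure.map (fun ω => (E₀ ω, E₁ ω)) ℙ = ν := by
    rw [(indepFun_iff_map_prod_eq_prod_map_map hE₀.aemeasurable hE₁.aemeasurable).1 hEE,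
      hlawE₀, hlawE₁]
  have hZpair : IndepFun Z (fun ω => (E₀ ω, E₁ ω)) ℙ := by
    have h := hindep.indepFun_prodMk hm 1 2 0 (by decide) (by decide)
    simpa using h.symm
  have htriplelaw : Measure.map (fun ω => (Z ω, (E₀ ω, E₁ ω))) ℙ = γ.prod ν := by
    rw [(indepFun_iff_map_prod_eq_prod_map_map hZ.aemeasurable
      (hE₀.prodMk hE₁).aemeasurable).1 hZpair, hlawZ, hpairlaw]
  -- core identity
  have core : ∀ t : ℝ, 1 - (ℙ {ω | Z ω + α₀ * E₀ ω + α * E₁ ω ≤ t}).toReal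
      = ∫ z, (w (t - z)).toReal ∂γ := by
    intro t
    have hSle : MeasurableSet {p : ℝ × (ℝ × ℝ) | p.1 + α₀ * p.2.1 + α * p.2.2 ≤ t} := by
      apply measurableSet_le (by fun_prop) (by fun_prop)
    have hSgt : MeasurableSet {p : ℝ × (ℝ × ℝ) | t < p.1 + α₀ * p.2.1 + α * p.2.2} := by
      apply measurableSet_lt (by fun_prop) (by fun_prop)
    have h1 : ℙ {ω | Z ω + α₀ * E₀ ω + α * E₁ ω ≤ t}
        = (γ.prod ν) {p : ℝ × (ℝ × ℝ) | p.1 + α₀ * p.2.1 + α * p.2.2 ≤ t} := by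
      rw [← htriplelaw, Measure.map_apply (hZ.prodMk (hE₀.prodMk hE₁)) hSle]
      rfl
    have hcompl : {p : ℝ × (ℝ × ℝ) | p.1 + α₀ * p.2.1 + α * p.2.2 ≤ t}ᶜ
        = {p : ℝ × (ℝ × ℝ) | t < p.1 + α₀ * p.2.1 + α * p.2.2} := by
      ext p; simp [not_le]
    have h2 : 1 - (ℙ {ω | Z ω + α₀ * E₀ ω + α * E₁ ω ≤ t}).toReal
        = ((γ.prod ν) {p : ℝ × (ℝ × ℝ) | t < p.1 + α₀ * p.2.1 + α * p.2.2}).toReal := by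
      rw [h1, ← hcompl, measure_compl hSle (measure_ne_top _ _), measure_univ,
        ENNReal.toReal_sub_of_le prob_le_one ENNReal.one_ne_top, ENNReal.toReal_one]
    rw [h2, Measure.prod_apply hSgt]
    have hpre : ∀ z : ℝ, (Prod.mk z ⁻¹' {p : ℝ × (ℝ × ℝ) | t < p.1 + α₀ * p.2.1 + α * p.2.2})
        = {q : ℝ × ℝ | t - z < α₀ * q.1 + α * q.2} := by
      intro z; ext q
      simp only [mem_preimage, mem_setOf_eq]
      constructor <;> intro h <;> linarith
    rw [show (fun z => ν (Prod.mk z ⁻¹' {p : ℝ × (ℝ × ℝ) | t < p.1 + α₀ * p.2.1 + α * p.2.2}))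
        = fun z => w (t - z) by funext z; rw [hpre z]]
    have hint := integral_toReal (μ := γ) (f := fun z => w (t - z))
      ((hwmeas.comp (measurable_const.sub measurable_id)).aemeasurable)
      (Filter.Eventually.of_forall fun z => lt_of_le_of_lt (hwle1 _) ENNReal.one_lt_top)
    exact hint.symm
  -- the sequence as integrals
  set F : ℕ → ℝ → ℝ := fun n z => (n:ℝ) * (w (c + αs * Real.log n - z)).toReal with hF
  set bound : ℝ → ℝ := fun z => K * Real.exp ((z - c) / αs) with hbound
  have hkey : ∀ n : ℕ, (n : ℝ) *
      (1 - (ℙ {ω | Z ω + α₀ * E₀ ω + α * E₁ ω ≤ c + αs * Real.log n}).toReal)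
      = ∫ z, F n z ∂γ := by
    intro n
    rw [core (c + αs * Real.log n)]
    rw [show (fun z => F n z) = fun z => (n:ℝ) • (w (c + αs * Real.log n - z)).toReal by
      funext z; simp [hF, smul_eq_mul]]
    rw [integral_smul, smul_eq_mul]
  -- dominated convergence
  have hFmeas : ∀ n : ℕ, AEStronglyMeasurable (F n) γ := by
    intro n
    apply Measurable.aestronglyMeasurable
    exact ((hwmeas.comp (measurable_const.sub measurable_id)).ennreal_toReal).const_mul _
  have hwtoReal_le : ∀ s, (w s).toReal ≤ K * Real.exp (-s / αs) := by
    intro s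
    exact ENNReal.toReal_le_of_le_ofReal
      (mul_nonneg hKpos.le (Real.exp_pos _).le) (hwle s)
  have hFnonneg : ∀ n z, 0 ≤ F n z := by
    intro n z
    exact mul_nonneg (Nat.cast_nonneg n) ENNReal.toReal_nonneg
  have hexp_eq : ∀ (n : ℕ), 1 ≤ n → ∀ z : ℝ,
      (n:ℝ) * Real.exp (-(c + αs * Real.log n - z) / αs) = Real.exp ((z - c) / αs) := by
    intro n hn z
    have hnpos : (0:ℝ) < n := by exact_mod_cast hn
    have harg : -(c + αs * Real.log n - z) / αs = (z - c) / αs + (-Real.log n) := by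
      field_simp
      ring
    rw [harg, Real.exp_add, Real.exp_neg, Real.exp_log hnpos]
    field_simp
  have h_bound : ∀ n : ℕ, ∀ᵐ z ∂γ, ‖F n z‖ ≤ bound z := by
    intro n
    filter_upwards with z
    rw [Real.norm_eq_abs, abs_of_nonneg (hFnonneg n z)]
    rcases Nat.eq_zero_or_pos n with h0 | h1
    · simp only [hF, h0, Nat.cast_zero, zero_mul]
      exact mul_nonneg hKpos.le (Real.exp_pos _).le
    · calc F n z ≤ (n:ℝ) * (K * Real.exp (-(c + αs * Real.log n - z) / αs)) := by
            exact mul_le_mul_of_nonneg_left (hwtoReal_le _) (Nat.cast_nonneg n)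
        _ = K * ((n:ℝ) * Real.exp (-(c + αs * Real.log n - z) / αs)) := by ring
        _ = bound z := by rw [hexp_eq n h1 z]
  have hbound_int : Integrable bound γ := by
    have h1 : Integrable (fun z => (K * Real.exp (-c / αs)) * Real.exp ((1/αs) * z)) γ :=
      (gauss_integrable_exp (1/αs)).const_mul _
    refine h1.congr (Filter.Eventually.of_forall fun z => ?_)
    show (K * Real.exp (-c / αs)) * Real.exp ((1/αs) * z) = K * Real.exp ((z - c) / αs)
    rw [mul_assoc, ← Real.exp_add]
    congr 1
    congr 1
    field_simp
    ring
  have hNcast : Tendsto (fun n : ℕ => (n:ℝ)) atTop atTop := tendsto_natCast_atTop_atTop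
  have h_lim : ∀ᵐ z ∂γ, Tendsto (fun n => F n z) atTop (nhds (bound z)) := by
    filter_upwards with z
    have hlog : Tendsto (fun n : ℕ => Real.log n) atTop atTop :=
      Real.tendsto_log_atTop.comp hNcast
    have hargTop : Tendsto (fun n : ℕ => αs * Real.log n + (c - z)) atTop atTop :=
      tendsto_atTop_add_const_right atTop (c - z) (hlog.const_mul_atTop hαspos)
    have hev : ∀ᶠ n : ℕ in atTop, 0 < c + αs * Real.log n - z ∧ 1 ≤ n := by
      refine Filter.Eventually.and ?_ (Filter.eventually_ge_atTop 1)
      filter_upwards [hargTop.eventually_gt_atTop 0] with n hn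
      linarith
    -- explicit formula for F n z eventually
    have hFform : (fun n : ℕ => F n z)
        =ᶠ[atTop] fun n : ℕ => (α * ((n:ℝ) * Real.exp (-(c + αs * Real.log n - z) / α))
          - α₀ * ((n:ℝ) * Real.exp (-(c + αs * Real.log n - z) / α₀))) / (α - α₀) := by
      filter_upwards [hev] with n hn
      have hs := hn.1
      show (n:ℝ) * (w (c + αs * Real.log n - z)).toReal = _
      rw [show w (c + αs * Real.log n - z)
          = ENNReal.ofReal (Ifun α₀ α (c + αs * Real.log n - z)) from G_eq hα₀ hα _,
        ENNReal.toReal_ofReal (Ifun_nonneg _), Ifun_formula hα₀ hα hne hs]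
      ring
    have hseq_top : Tendsto (fun n : ℕ => (n:ℝ) * Real.exp (-(c + αs * Real.log n - z) / αs))
        atTop (nhds (Real.exp ((z - c) / αs))) := by
      refine Tendsto.congr' ?_ tendsto_const_nhds
      filter_upwards [Filter.eventually_ge_atTop 1] with n hn
      exact (hexp_eq n hn z).symm
    have hseq_bot : ∀ β : ℝ, 0 < β → β < αs →
        Tendsto (fun n : ℕ => (n:ℝ) * Real.exp (-(c + αs * Real.log n - z) / β))
          atTop (nhds 0) := by
      intro β hβ hβs
      have h1 : Tendsto (fun y : ℝ => y ^ (1 - αs/β)) atTop (nhds 0) := by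
        have h := tendsto_rpow_neg_atTop (y := αs/β - 1)
          (by rw [sub_pos, lt_div_iff₀ hβ]; linarith)
        simpa [neg_sub] using h
      have h2 : Tendsto (fun n : ℕ => ((n:ℝ)) ^ (1 - αs/β)) atTop (nhds 0) := h1.comp hNcast
      have h3 : Tendsto (fun n : ℕ => Real.exp ((z - c)/β) * ((n:ℝ)) ^ (1 - αs/β))
          atTop (nhds 0) := by
        simpa using h2.const_mul (Real.exp ((z - c)/β))
      refine Tendsto.congr' ?_ h3
      filter_upwards [Filter.eventually_ge_atTop 1] with n hn
      have hnpos : (0:ℝ) < n := by exact_mod_cast hn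
      rw [Real.rpow_def_of_pos hnpos, ← Real.exp_add,
        show (z - c)/β + Real.log n * (1 - αs/β)
          = Real.log n + (-(c + αs * Real.log n - z) / β) by field_simp; ring,
        Real.exp_add, Real.exp_log hnpos]
    rcases lt_or_gt_of_ne hne with hlt | hlt
    · -- α₀ < α, so αs = α
      have hαα : αs = α := hαs.trans (max_eq_right hlt.le)
      have hA : Tendsto (fun n : ℕ => (n:ℝ) * Real.exp (-(c + αs * Real.log n - z) / α))
          atTop (nhds (Real.exp ((z - c) / αs))) := by rw [← hαα]; exact hseq_top
      have hB : Tendsto (fun n : ℕ => (n:ℝ) * Real.exp (-(c + αs * Real.log n - z) / α₀))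
          atTop (nhds 0) := hseq_bot α₀ hα₀ (by rw [hαα]; exact hlt)
      have hcomb := ((hA.const_mul α).sub (hB.const_mul α₀)).div_const (α - α₀)
      have hvalue : (α * Real.exp ((z - c) / αs) - α₀ * 0) / (α - α₀) = bound z := by
        show _ = K * Real.exp ((z - c) / αs)
        rw [hK, hαα, abs_of_neg (by linarith : α₀ - α < 0), neg_sub,
          mul_zero, sub_zero, div_mul_eq_mul_div]
      rw [hvalue] at hcomb
      exact Tendsto.congr' hFform.symm hcomb
    · -- α < α₀, so αs = α₀
      have hαα : αs = α₀ := hαs.trans (max_eq_left hlt.le)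
      have hA : Tendsto (fun n : ℕ => (n:ℝ) * Real.exp (-(c + αs * Real.log n - z) / α₀))
          atTop (nhds (Real.exp ((z - c) / αs))) := by rw [← hαα]; exact hseq_top
      have hB : Tendsto (fun n : ℕ => (n:ℝ) * Real.exp (-(c + αs * Real.log n - z) / α))
          atTop (nhds 0) := hseq_bot α hα (by rw [hαα]; exact hlt)
      have hcomb := ((hB.const_mul α).sub (hA.const_mul α₀)).div_const (α - α₀)
      have hvalue : (α * 0 - α₀ * Real.exp ((z - c) / αs)) / (α - α₀) = bound z := by
        show _ = K * Real.exp ((z - c) / αs)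
        rw [hK, hαα, abs_of_pos (by linarith : (0:ℝ) < α₀ - α)]
        have h1 : α - α₀ ≠ 0 := by linarith
        have h2 : α₀ - α ≠ 0 := by linarith
        field_simp
        ring
      rw [hvalue] at hcomb
      exact Tendsto.congr' hFform.symm hcomb
    all_goals done
  have hDCT := tendsto_integral_of_dominated_convergence bound hFmeas hbound_int h_bound h_lim
  have hval : ∫ z, bound z ∂γ = x := by
    have h1 : ∫ z, bound z ∂γ = (K * Real.exp (-c/αs)) * Real.exp ((1/αs)^2/2) := by
      calc ∫ z, bound z ∂γ
          = ∫ z, (K * Real.exp (-c/αs)) * Real.exp ((1/αs) * z) ∂γ := by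
            apply integral_congr_ae
            filter_upwards with z
            show K * Real.exp ((z - c) / αs) = _
            rw [mul_assoc, ← Real.exp_add]
            congr 1
            congr 1
            field_simp
            ring
        _ = (K * Real.exp (-c/αs)) * ∫ z, Real.exp ((1/αs) * z) ∂γ := by
            rw [show (fun z => (K * Real.exp (-c/αs)) * Real.exp ((1/αs) * z))
              = fun z => (K * Real.exp (-c/αs)) • Real.exp ((1/αs) * z) from rfl,
              integral_smul, smul_eq_mul]
        _ = (K * Real.exp (-c/αs)) * Real.exp ((1/αs)^2/2) := by rw [gauss_integral_exp]
    rw [h1]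
    have harg : -c/αs + (1/αs)^2/2 = Real.log x - Real.log K := by
      rw [hc]
      have h05 : (0.5 : ℝ) = 1/2 := by norm_num
      rw [h05]
      field_simp
      ring
    rw [mul_assoc, ← Real.exp_add, harg, Real.exp_sub, Real.exp_log hx, Real.exp_log hKpos]
    field_simp
  rw [hval] at hDCT
  exact Tendsto.congr (fun n => (hkey n).symm) hDCT

end Main
end

section
/- Let Z be a standard normal random variable and V₀, V₁ i.i.d. random variables with the Pareto(1, k) distribution for some k > 1, with (Z, V₀, V₁) mutually independent, and let α₀, α₁ > 0. Then c^k · P(Z + α₀·V₀ + α₁·V₁ > c) → α₀^k + α₁^k as c → ∞. -/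
open MeasureTheory ProbabilityTheory Filter Set
open scoped NNReal ENNReal

private lemma gauss_Iic_le' (x : ℝ) :
    gaussianReal 0 1 (Iic x) ≤ ENNReal.ofReal (Real.exp (1/2 + x)) := by
  rw [gaussianReal_apply 0 one_ne_zero (Iic x)]
  calc ∫⁻ y in Iic x, gaussianPDF 0 1 y
      ≤ ∫⁻ y in Iic x, ENNReal.ofReal (Real.exp (1/2) * Real.exp y) := by
        refine lintegral_mono fun y => ?_
        unfold gaussianPDF gaussianPDFReal
        refine ENNReal.ofReal_le_ofReal ?_
        have h1 : (Real.sqrt (2 * Real.pi * (1:ℝ≥0)))⁻¹ ≤ 1 := by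
          rw [inv_le_one_iff₀]
          right
          rw [show ((1:ℝ≥0):ℝ) = 1 by norm_num, mul_one]
          nlinarith [Real.sq_sqrt (by positivity : (0:ℝ) ≤ 2 * Real.pi),
            Real.sqrt_nonneg (2*Real.pi), Real.pi_gt_three]
        have h2 : Real.exp (-(y - 0)^2 / (2 * (1:ℝ≥0))) ≤ Real.exp (1/2) * Real.exp y := by
          rw [← Real.exp_add]
          refine Real.exp_le_exp.2 ?_
          rw [show ((1:ℝ≥0):ℝ) = 1 by norm_num]
          nlinarith [sq_nonneg (y + 1)]
        calc (Real.sqrt (2 * Real.pi * (1:ℝ≥0)))⁻¹ * Real.exp (-(y - 0)^2 / (2 * (1:ℝ≥0)))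
            ≤ 1 * (Real.exp (1/2) * Real.exp y) :=
              mul_le_mul h1 h2 (Real.exp_nonneg _) one_pos.le
          _ = Real.exp (1/2) * Real.exp y := one_mul _
    _ = ENNReal.ofReal (∫ y in Iic x, Real.exp (1/2) * Real.exp y) := by
        rw [← ofReal_integral_eq_lintegral_ofReal
          ((integrableOn_exp_Iic x).const_mul _)
          (Filter.Eventually.of_forall fun y => by positivity)]
    _ ≤ ENNReal.ofReal (Real.exp (1/2 + x)) := by
        rw [MeasureTheory.integral_const_mul, integral_exp_Iic, ← Real.exp_add]

private lemma gauss_Ici_le' (x : ℝ) :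
    gaussianReal 0 1 (Ici x) ≤ ENNReal.ofReal (Real.exp (1/2 - x)) := by
  have hmap : Measure.map (fun y : ℝ => -y) (gaussianReal 0 1) = gaussianReal 0 1 := by
    have h := gaussianReal_map_const_mul (μ := 0) (v := 1) (-1)
    have h2 : (⟨(-1:ℝ)^2, sq_nonneg _⟩ : ℝ≥0) = 1 := by ext; norm_num
    simpa [h2] using h
  have heq : gaussianReal 0 1 (Ici x) = gaussianReal 0 1 (Iic (-x)) := by
    conv_lhs => rw [← hmap]
    rw [Measure.map_apply measurable_neg measurableSet_Ici]
    congr 1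
    ext y
    simp [le_neg]
  rw [heq]
  simpa [sub_eq_add_neg] using gauss_Iic_le' (-x)

private lemma ratio_rpow_one' (k : ℝ) (a : ℝ → ℝ) (h0 : Tendsto a atTop atTop)
    (h : Tendsto (fun c => c / a c) atTop (nhds 1)) :
    Tendsto (fun c => c ^ k * a c ^ (-k)) atTop (nhds 1) := by
  have h1 : Tendsto (fun c => (c / a c) ^ k) atTop (nhds 1) := by
    have hc : ContinuousAt (fun x : ℝ => x ^ k) 1 :=
      Real.continuousAt_rpow_const 1 k (Or.inl one_ne_zero)
    simpa [Real.one_rpow, Function.comp_def] using hc.tendsto.comp h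
  refine h1.congr' ?_
  filter_upwards [h0.eventually_gt_atTop 0, eventually_gt_atTop 0] with c ha hc
  rw [Real.div_rpow hc.le ha.le, Real.rpow_neg ha.le, div_eq_mul_inv]

private lemma tail_term_tendsto' (k α : ℝ) (hα : 0 < α) (a : ℝ → ℝ) (h0 : Tendsto a atTop atTop)
    (h : Tendsto (fun c => c / a c) atTop (nhds 1)) :
    Tendsto (fun c => c ^ k * (a c / α) ^ (-k)) atTop (nhds (α ^ k)) := by
  have h1 := (ratio_rpow_one' k a h0 h).mul_const (α ^ k)
  rw [one_mul] at h1
  refine h1.congr' ?_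
  filter_upwards [h0.eventually_gt_atTop 0, eventually_gt_atTop 0] with c ha hc
  rw [Real.div_rpow ha.le hα.le, Real.rpow_neg hα.le, div_eq_mul_inv, inv_inv]
  ring

private lemma hma' : Tendsto (fun c : ℝ => c ^ (-(1/3 : ℝ))) atTop (nhds 0) :=
  tendsto_rpow_neg_atTop (by norm_num)

private lemma hpow_eq' {c : ℝ} (hc : 0 < c) : c ^ ((2:ℝ)/3) = c * c ^ (-(1/3 : ℝ)) := by
  have h := (Real.rpow_add hc 1 (-(1/3 : ℝ))).symm
  rw [Real.rpow_one] at h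
  rw [h]
  norm_num

private lemma hplus' : Tendsto (fun c : ℝ => c / (c + c ^ ((2:ℝ)/3))) atTop (nhds 1) := by
  have h1 : Tendsto (fun c : ℝ => (1 + c ^ (-(1/3 : ℝ)))⁻¹) atTop (nhds 1) := by
    have := (tendsto_const_nhds.add hma').inv₀ (by norm_num : (1:ℝ) + 0 ≠ 0)
    simpa using this
  refine h1.congr' ?_
  filter_upwards [eventually_gt_atTop 0] with c hc
  rw [hpow_eq' hc, show c + c * c ^ (-(1/3:ℝ)) = c * (1 + c ^ (-(1/3:ℝ))) by ring,
    div_mul_eq_div_div, div_self hc.ne']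
  exact (one_div _).symm

private lemma hminus' : Tendsto (fun c : ℝ => c / (c - 2 * c ^ ((2:ℝ)/3))) atTop (nhds 1) := by
  have h1 : Tendsto (fun c : ℝ => (1 - 2 * c ^ (-(1/3 : ℝ)))⁻¹) atTop (nhds 1) := by
    have := (tendsto_const_nhds.sub (hma'.const_mul 2)).inv₀ (by norm_num : (1:ℝ) - 2*0 ≠ 0)
    simpa using this
  refine h1.congr' ?_
  filter_upwards [eventually_gt_atTop 0] with c hc
  rw [hpow_eq' hc, show c - 2 * (c * c ^ (-(1/3:ℝ))) = c * (1 - 2 * c ^ (-(1/3:ℝ))) by ring,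
    div_mul_eq_div_div, div_self hc.ne']
  exact (one_div _).symm

private lemma hplusinf' : Tendsto (fun c : ℝ => c + c ^ ((2:ℝ)/3)) atTop atTop := by
  refine tendsto_atTop_mono' atTop ?_ tendsto_id
  filter_upwards [eventually_ge_atTop 0] with c hc
  have := Real.rpow_nonneg hc ((2:ℝ)/3)
  simp only [id]
  linarith

private lemma hminusinf' : Tendsto (fun c : ℝ => c - 2 * c ^ ((2:ℝ)/3)) atTop atTop := by
  refine tendsto_atTop_mono' atTop ?_ (tendsto_id.atTop_div_const (by norm_num : (0:ℝ) < 2))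
  filter_upwards [eventually_gt_atTop 0,
    hma'.eventually_le_const (by norm_num : (0:ℝ) < 1/4)] with c hc h4
  have h23 : c ^ ((2:ℝ)/3) ≤ c / 4 := by
    rw [hpow_eq' hc]
    calc c * c ^ (-(1/3:ℝ)) ≤ c * (1/4) := mul_le_mul_of_nonneg_left h4 hc.le
      _ = c / 4 := by ring
  simp only [id]
  linarith

private lemma hm_inf' : Tendsto (fun c : ℝ => c ^ ((2:ℝ)/3)) atTop atTop :=
  tendsto_rpow_atTop (by norm_num)

private lemma hgauss0' (k : ℝ) : Tendsto (fun c : ℝ => c ^ k * Real.exp (1/2 - c ^ ((2:ℝ)/3)))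
    atTop (nhds 0) := by
  have h1 := tendsto_rpow_mul_exp_neg_mul_atTop_nhds_zero ((3/2)*k) 1 one_pos
  have h2 := (h1.comp hm_inf').const_mul (Real.exp (1/2))
  rw [mul_zero] at h2
  refine h2.congr' ?_
  filter_upwards [eventually_ge_atTop 0] with c hc
  simp only [Function.comp]
  rw [← Real.rpow_mul hc, show (2:ℝ)/3 * ((3/2)*k) = k by ring, Real.exp_sub, neg_one_mul,
    Real.exp_neg]
  ring

private lemma hcross0' (k α₀ α₁ : ℝ) (hk : 0 < k) (hα₀ : 0 < α₀) (hα₁ : 0 < α₁) :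
    Tendsto (fun c : ℝ => c ^ k * ((c ^ ((2:ℝ)/3) / α₀) ^ (-k) * (c ^ ((2:ℝ)/3) / α₁) ^ (-k)))
    atTop (nhds 0) := by
  have h1 := (tendsto_rpow_neg_atTop (show (0:ℝ) < k/3 by linarith)).mul_const (α₀ ^ k * α₁ ^ k)
  rw [zero_mul] at h1
  refine h1.congr' ?_
  filter_upwards [eventually_gt_atTop 0] with c hc
  have h23 : (0:ℝ) ≤ c ^ ((2:ℝ)/3) := Real.rpow_nonneg hc.le _
  rw [Real.div_rpow h23 hα₀.le, Real.div_rpow h23 hα₁.le, Real.rpow_neg hα₀.le,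
    Real.rpow_neg hα₁.le, ← Real.rpow_mul hc.le,
    div_eq_mul_inv (c ^ ((2:ℝ)/3 * -k)) (α₀ ^ k)⁻¹, inv_inv,
    div_eq_mul_inv (c ^ ((2:ℝ)/3 * -k)) (α₁ ^ k)⁻¹, inv_inv]
  have e1 : c ^ (-(k/3)) = c ^ k * c ^ ((2:ℝ)/3 * -k) * c ^ ((2:ℝ)/3 * -k) := by
    rw [← Real.rpow_add hc, ← Real.rpow_add hc]
    congr 1
    ring
  rw [e1]
  ring

theorem pareto_sum_tail_asymptotics
    {Ω : Type*} [MeasureSpace Ω] [IsProbabilityMeasure (ℙ : Measure Ω)]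
    (Z V₀ V₁ : Ω → ℝ) (hZ : Measurable Z) (hV₀ : Measurable V₀) (hV₁ : Measurable V₁)
    (hlawZ : Measure.map Z ℙ = gaussianReal 0 1)
    (k : ℝ) (hk : 1 < k)
    (hlawV₀ : ∀ x : ℝ, ℙ {ω | x < V₀ ω} = ENNReal.ofReal (if 1 ≤ x then x ^ (-k) else 1))
    (hlawV₁ : ∀ x : ℝ, ℙ {ω | x < V₁ ω} = ENNReal.ofReal (if 1 ≤ x then x ^ (-k) else 1))
    (hindep : iIndepFun ![Z, V₀, V₁] ℙ)
    (α₀ α₁ : ℝ) (hα₀ : 0 < α₀) (hα₁ : 0 < α₁) :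
    Tendsto (fun c : ℝ =>
        c ^ k * (ℙ {ω | c < Z ω + α₀ * V₀ ω + α₁ * V₁ ω}).toReal)
      atTop (nhds (α₀ ^ k + α₁ ^ k)) := by
  have hk0 : (0:ℝ) < k := by linarith
  -- marginal laws, preimage form
  have hV₀' : ∀ x : ℝ, 1 ≤ x → ℙ (V₀ ⁻¹' Ioi x) = ENNReal.ofReal (x ^ (-k)) := fun x hx => by
    have := hlawV₀ x
    rw [if_pos hx] at this
    exact this
  have hV₁' : ∀ x : ℝ, 1 ≤ x → ℙ (V₁ ⁻¹' Ioi x) = ENNReal.ofReal (x ^ (-k)) := fun x hx => by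
    have := hlawV₁ x
    rw [if_pos hx] at this
    exact this
  have hV₀0 : ℙ (V₀ ⁻¹' Ioi (0:ℝ)) = 1 := by
    have := hlawV₀ 0
    rw [if_neg (by norm_num), ENNReal.ofReal_one] at this
    exact this
  have hV₁0 : ℙ (V₁ ⁻¹' Ioi (0:ℝ)) = 1 := by
    have := hlawV₁ 0
    rw [if_neg (by norm_num), ENNReal.ofReal_one] at this
    exact this
  -- gaussian tail bounds
  have hZIoi : ∀ x : ℝ, ℙ (Z ⁻¹' Ioi x) ≤ ENNReal.ofReal (Real.exp (1/2 - x)) := fun x => by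
    rw [← Measure.map_apply hZ measurableSet_Ioi, hlawZ]
    exact le_trans (measure_mono Ioi_subset_Ici_self) (gauss_Ici_le' x)
  have hZlow : ∀ x : ℝ, 1 - Real.exp (1/2 - x) ≤ (ℙ (Z ⁻¹' Ioi (-x))).toReal := fun x => by
    have hc : Z ⁻¹' Ioi (-x) = (Z ⁻¹' Iic (-x))ᶜ := by
      ext ω; simp [not_le]
    have hIic : ℙ (Z ⁻¹' Iic (-x)) ≤ ENNReal.ofReal (Real.exp (1/2 - x)) := by
      rw [← Measure.map_apply hZ measurableSet_Iic, hlawZ]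
      simpa [sub_eq_add_neg] using gauss_Iic_le' (-x)
    rw [hc, measure_compl (hZ measurableSet_Iic) (measure_ne_top _ _), measure_univ,
      ENNReal.toReal_sub_of_le prob_le_one ENNReal.one_ne_top, ENNReal.toReal_one]
    have := ENNReal.toReal_le_of_le_ofReal (Real.exp_nonneg _) hIic
    linarith
  -- independence pieces
  have hIV : IndepFun V₀ V₁ ℙ := by
    have h := hindep.indepFun (i := 1) (j := 2) (by decide)
    simpa using h
  have hpair : ∀ a b : ℝ, ℙ (V₀ ⁻¹' Ioi a ∩ V₁ ⁻¹' Ioi b)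
      = ℙ (V₀ ⁻¹' Ioi a) * ℙ (V₁ ⁻¹' Ioi b) := fun a b =>
    hIV.measure_inter_preimage_eq_mul (Ioi a) (Ioi b) measurableSet_Ioi measurableSet_Ioi
  have htriple : ∀ s₀ s₁ s₂ : Set ℝ, MeasurableSet s₀ → MeasurableSet s₁ → MeasurableSet s₂ →
      ℙ (Z ⁻¹' s₀ ∩ V₀ ⁻¹' s₁ ∩ V₁ ⁻¹' s₂)
        = ℙ (Z ⁻¹' s₀) * ℙ (V₀ ⁻¹' s₁) * ℙ (V₁ ⁻¹' s₂) := by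
    intro s₀ s₁ s₂ h₀ h₁ h₂
    have h := hindep.meas_iInter (s := ![Z ⁻¹' s₀, V₀ ⁻¹' s₁, V₁ ⁻¹' s₂]) ?_
    · rw [Fin.prod_univ_three] at h
      simp only [Matrix.cons_val_zero, Matrix.cons_val_one, Matrix.head_cons,
        Matrix.cons_val_two, Matrix.tail_cons] at h
      rw [← h]
      congr 1
      ext ω
      simp [Fin.forall_fin_succ, and_assoc]
    · intro i
      fin_cases i
      · exact ⟨s₀, h₀, rfl⟩
      · exact ⟨s₁, h₁, rfl⟩
      · exact ⟨s₂, h₂, rfl⟩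
  -- squeeze
  refine tendsto_of_tendsto_of_tendsto_of_le_of_le'
    (g := fun c : ℝ => (1 - Real.exp (1/2 - c ^ ((2:ℝ)/3))) *
        (c ^ k * (((c + c ^ ((2:ℝ)/3))/α₀) ^ (-k) + ((c + c ^ ((2:ℝ)/3))/α₁) ^ (-k)))
      - c ^ k * (((c + c ^ ((2:ℝ)/3))/α₀) ^ (-k) * ((c + c ^ ((2:ℝ)/3))/α₁) ^ (-k)))
    (h := fun c : ℝ => c ^ k * Real.exp (1/2 - c ^ ((2:ℝ)/3))
      + c ^ k * (((c - 2 * c ^ ((2:ℝ)/3))/α₀) ^ (-k) + ((c - 2 * c ^ ((2:ℝ)/3))/α₁) ^ (-k))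
      + c ^ k * ((c ^ ((2:ℝ)/3)/α₀) ^ (-k) * (c ^ ((2:ℝ)/3)/α₁) ^ (-k)))
    ?_ ?_ ?_ ?_
  · -- lower function tendsto
    have hexp0 : Tendsto (fun c : ℝ => Real.exp (1/2 - c ^ ((2:ℝ)/3))) atTop (nhds 0) := by
      apply Real.tendsto_exp_atBot.comp
      have h1 : Tendsto (fun c : ℝ => 1/2 + -(c ^ ((2:ℝ)/3))) atTop atBot :=
        tendsto_atBot_add_const_left atTop (1/2) (tendsto_neg_atTop_atBot.comp hm_inf')
      refine h1.congr fun c => ?_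
      ring
    have ht₀ := tail_term_tendsto' k α₀ hα₀ _ hplusinf' hplus'
    have ht₁ := tail_term_tendsto' k α₁ hα₁ _ hplusinf' hplus'
    have ht₁0 : Tendsto (fun c : ℝ => ((c + c ^ ((2:ℝ)/3))/α₁) ^ (-k)) atTop (nhds 0) := by
      have := (tendsto_rpow_neg_atTop hk0).comp (hplusinf'.atTop_div_const hα₁)
      simpa [Function.comp_def] using this
    have hone : Tendsto (fun _ : ℝ => (1:ℝ)) atTop (nhds 1) := tendsto_const_nhds
    have h := ((hone.sub hexp0).mul (ht₀.add ht₁)).sub (ht₀.mul ht₁0)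
    have heq : (1 - 0 : ℝ) * (α₀ ^ k + α₁ ^ k) - α₀ ^ k * 0 = α₀ ^ k + α₁ ^ k := by ring
    rw [heq] at h
    refine h.congr fun c => ?_
    ring
  · -- upper function tendsto
    have ht₀ := tail_term_tendsto' k α₀ hα₀ _ hminusinf' hminus'
    have ht₁ := tail_term_tendsto' k α₁ hα₁ _ hminusinf' hminus'
    have h := ((hgauss0' k).add (ht₀.add ht₁)).add (hcross0' k α₀ α₁ hk0 hα₀ hα₁)
    have heq : (0:ℝ) + (α₀ ^ k + α₁ ^ k) + 0 = α₀ ^ k + α₁ ^ k := by ring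
    rw [heq] at h
    refine h.congr fun c => ?_
    ring
  · -- lower bound eventually
    filter_upwards [hplusinf'.eventually_ge_atTop (max α₀ α₁), eventually_ge_atTop 1]
      with c hcm hc1
    have hc0 : (0:ℝ) < c := by linarith
    set m := c ^ ((2:ℝ)/3) with hm_def
    set x₀ := (c + m)/α₀ with hx₀_def
    set x₁ := (c + m)/α₁ with hx₁_def
    have h1x₀ : 1 ≤ x₀ := (one_le_div hα₀).2 (le_trans (le_max_left _ _) hcm)
    have h1x₁ : 1 ≤ x₁ := (one_le_div hα₁).2 (le_trans (le_max_right _ _) hcm)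
    have hq₀nn : 0 ≤ x₀ ^ (-k) := Real.rpow_nonneg (by linarith) _
    have hq₁nn : 0 ≤ x₁ ^ (-k) := Real.rpow_nonneg (by linarith) _
    set Sev := {ω | c < Z ω + α₀ * V₀ ω + α₁ * V₁ ω} with hSev_def
    set A := Z ⁻¹' Ioi (-m) with hA_def
    set B₀ := V₀ ⁻¹' Ioi x₀ with hB₀_def
    set B₁ := V₁ ⁻¹' Ioi x₁ with hB₁_def
    set C₀ := V₀ ⁻¹' Ioi (0:ℝ) with hC₀_def
    set C₁ := V₁ ⁻¹' Ioi (0:ℝ) with hC₁_def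
    have hE0 : ℙ (A ∩ B₀ ∩ C₁) = ℙ A * ENNReal.ofReal (x₀ ^ (-k)) := by
      rw [hA_def, hB₀_def, hC₁_def,
        htriple (Ioi (-m)) (Ioi x₀) (Ioi 0) measurableSet_Ioi measurableSet_Ioi measurableSet_Ioi,
        hV₀' x₀ h1x₀, hV₁0, mul_one]
    have hE1 : ℙ (A ∩ C₀ ∩ B₁) = ℙ A * ENNReal.ofReal (x₁ ^ (-k)) := by
      rw [hA_def, hC₀_def, hB₁_def,
        htriple (Ioi (-m)) (Ioi 0) (Ioi x₁) measurableSet_Ioi measurableSet_Ioi measurableSet_Ioi,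
        hV₀0, hV₁' x₁ h1x₁, mul_one]
    have hsub : A ∩ B₀ ∩ C₁ ∪ A ∩ C₀ ∩ B₁ ⊆ Sev := by
      rintro ω (⟨⟨hA1, hB⟩, hC⟩ | ⟨⟨hA1, hC⟩, hB⟩)
      · have hB' : (c + m)/α₀ < V₀ ω := hB
        have hA' : -m < Z ω := hA1
        have hC' : (0:ℝ) < V₁ ω := hC
        rw [div_lt_iff₀ hα₀] at hB'
        show c < Z ω + α₀ * V₀ ω + α₁ * V₁ ω
        nlinarith [mul_pos hα₁ hC']
      · have hB' : (c + m)/α₁ < V₁ ω := hB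
        have hA' : -m < Z ω := hA1
        have hC' : (0:ℝ) < V₀ ω := hC
        rw [div_lt_iff₀ hα₁] at hB'
        show c < Z ω + α₀ * V₀ ω + α₁ * V₁ ω
        nlinarith [mul_pos hα₀ hC']
    have hpairval : ℙ (B₀ ∩ B₁) = ENNReal.ofReal (x₀ ^ (-k)) * ENNReal.ofReal (x₁ ^ (-k)) := by
      rw [hB₀_def, hB₁_def, hpair x₀ x₁, hV₀' x₀ h1x₀, hV₁' x₁ h1x₁]
    have hcaple : ℙ (A ∩ B₀ ∩ C₁ ∩ (A ∩ C₀ ∩ B₁))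
        ≤ ENNReal.ofReal (x₀ ^ (-k)) * ENNReal.ofReal (x₁ ^ (-k)) := by
      refine le_trans (measure_mono ?_) (le_of_eq hpairval)
      rintro ω ⟨⟨⟨-, h1⟩, -⟩, ⟨-, -⟩, h2⟩
      exact ⟨h1, h2⟩
    have hmeasE1 : MeasurableSet (A ∩ C₀ ∩ B₁) :=
      ((hZ measurableSet_Ioi).inter (hV₀ measurableSet_Ioi)).inter (hV₁ measurableSet_Ioi)
    have key : ℙ A * ENNReal.ofReal (x₀ ^ (-k)) + ℙ A * ENNReal.ofReal (x₁ ^ (-k))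
        ≤ ℙ Sev + ENNReal.ofReal (x₀ ^ (-k)) * ENNReal.ofReal (x₁ ^ (-k)) := by
      rw [← hE0, ← hE1, ← measure_union_add_inter _ hmeasE1]
      exact add_le_add (measure_mono hsub) hcaple
    have hne : ℙ Sev + ENNReal.ofReal (x₀ ^ (-k)) * ENNReal.ofReal (x₁ ^ (-k)) ≠ ⊤ :=
      ENNReal.add_ne_top.2 ⟨measure_ne_top _ _,
        ENNReal.mul_ne_top ENNReal.ofReal_ne_top ENNReal.ofReal_ne_top⟩
    have key' := ENNReal.toReal_mono hne key
    rw [ENNReal.toReal_add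
        (ENNReal.mul_ne_top (measure_ne_top _ _) ENNReal.ofReal_ne_top)
        (ENNReal.mul_ne_top (measure_ne_top _ _) ENNReal.ofReal_ne_top),
      ENNReal.toReal_add (measure_ne_top _ _)
        (ENNReal.mul_ne_top ENNReal.ofReal_ne_top ENNReal.ofReal_ne_top),
      ENNReal.toReal_mul, ENNReal.toReal_mul, ENNReal.toReal_mul,
      ENNReal.toReal_ofReal hq₀nn, ENNReal.toReal_ofReal hq₁nn] at key'
    have haup : (ℙ A).toReal ≤ 1 :=
      ENNReal.toReal_mono ENNReal.one_ne_top prob_le_one |>.trans_eq ENNReal.toReal_one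
    have halow : 1 - Real.exp (1/2 - m) ≤ (ℙ A).toReal := hZlow m
    have hck : 0 ≤ c ^ k := Real.rpow_nonneg hc0.le _
    have step : (1 - Real.exp (1/2 - m)) * (x₀ ^ (-k) + x₁ ^ (-k)) - x₀ ^ (-k) * x₁ ^ (-k)
        ≤ (ℙ Sev).toReal := by
      nlinarith [mul_nonneg (sub_nonneg.2 halow) (add_nonneg hq₀nn hq₁nn)]
    calc (1 - Real.exp (1/2 - m)) * (c ^ k * (x₀ ^ (-k) + x₁ ^ (-k)))
          - c ^ k * (x₀ ^ (-k) * x₁ ^ (-k))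
        = c ^ k * ((1 - Real.exp (1/2 - m)) * (x₀ ^ (-k) + x₁ ^ (-k))
            - x₀ ^ (-k) * x₁ ^ (-k)) := by ring
      _ ≤ c ^ k * (ℙ Sev).toReal := mul_le_mul_of_nonneg_left step hck
  · -- upper bound eventually
    filter_upwards [hminusinf'.eventually_ge_atTop (max α₀ α₁),
      hm_inf'.eventually_ge_atTop (max α₀ α₁), eventually_ge_atTop 1] with c h2m hmα hc1
    have hc0 : (0:ℝ) < c := by linarith
    set m := c ^ ((2:ℝ)/3) with hm_def
    set y₀ := (c - 2*m)/α₀ with hy₀_def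
    set y₁ := (c - 2*m)/α₁ with hy₁_def
    set z₀ := m/α₀ with hz₀_def
    set z₁ := m/α₁ with hz₁_def
    have h1y₀ : 1 ≤ y₀ := (one_le_div hα₀).2 (le_trans (le_max_left _ _) h2m)
    have h1y₁ : 1 ≤ y₁ := (one_le_div hα₁).2 (le_trans (le_max_right _ _) h2m)
    have h1z₀ : 1 ≤ z₀ := (one_le_div hα₀).2 (le_trans (le_max_left _ _) hmα)
    have h1z₁ : 1 ≤ z₁ := (one_le_div hα₁).2 (le_trans (le_max_right _ _) hmα)
    have hy₀nn : 0 ≤ y₀ ^ (-k) := Real.rpow_nonneg (by linarith) _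
    have hy₁nn : 0 ≤ y₁ ^ (-k) := Real.rpow_nonneg (by linarith) _
    have hz₀nn : 0 ≤ z₀ ^ (-k) := Real.rpow_nonneg (by linarith) _
    have hz₁nn : 0 ≤ z₁ ^ (-k) := Real.rpow_nonneg (by linarith) _
    set Sev := {ω | c < Z ω + α₀ * V₀ ω + α₁ * V₁ ω} with hSev_def
    have hsub : Sev ⊆ Z ⁻¹' Ioi m ∪ (V₀ ⁻¹' Ioi y₀ ∪ (V₁ ⁻¹' Ioi y₁
        ∪ (V₀ ⁻¹' Ioi z₀ ∩ V₁ ⁻¹' Ioi z₁))) := by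
      intro ω hω
      simp only [hSev_def, mem_setOf_eq] at hω
      by_contra h
      simp only [mem_union, mem_preimage, mem_Ioi, mem_inter_iff, not_or, not_lt, not_and] at h
      obtain ⟨hZle, hB, hB', hR⟩ := h
      rcases le_or_gt (V₀ ω) z₀ with h0 | h0
      · rw [hz₀_def, le_div_iff₀ hα₀] at h0
        rw [hy₁_def, le_div_iff₀ hα₁] at hB'
        nlinarith
      · have h1 := hR h0
        rw [hz₁_def, le_div_iff₀ hα₁] at h1
        rw [hy₀_def, le_div_iff₀ hα₀] at hB
        nlinarith
    have hcross : ℙ (V₀ ⁻¹' Ioi z₀ ∩ V₁ ⁻¹' Ioi z₁)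
        = ENNReal.ofReal (z₀ ^ (-k) * z₁ ^ (-k)) := by
      rw [hpair z₀ z₁, hV₀' z₀ h1z₀, hV₁' z₁ h1z₁, ← ENNReal.ofReal_mul hz₀nn]
    have hmeas : ℙ Sev ≤ ENNReal.ofReal (Real.exp (1/2 - m)
        + (y₀ ^ (-k) + (y₁ ^ (-k) + z₀ ^ (-k) * z₁ ^ (-k)))) := by
      refine le_trans (measure_mono hsub) ?_
      refine le_trans (measure_union_le _ _) ?_
      rw [ENNReal.ofReal_add (Real.exp_nonneg _) (by positivity)]
      refine add_le_add (hZIoi m) ?_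
      refine le_trans (measure_union_le _ _) ?_
      rw [ENNReal.ofReal_add hy₀nn (by positivity)]
      refine add_le_add (le_of_eq (hV₀' y₀ h1y₀)) ?_
      refine le_trans (measure_union_le _ _) ?_
      rw [ENNReal.ofReal_add hy₁nn (by positivity)]
      exact add_le_add (le_of_eq (hV₁' y₁ h1y₁)) (le_of_eq hcross)
    have hPle := ENNReal.toReal_le_of_le_ofReal (by positivity) hmeas
    have hck : 0 ≤ c ^ k := Real.rpow_nonneg hc0.le _
    calc c ^ k * (ℙ Sev).toReal
        ≤ c ^ k * (Real.exp (1/2 - m)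
            + (y₀ ^ (-k) + (y₁ ^ (-k) + z₀ ^ (-k) * z₁ ^ (-k)))) :=
          mul_le_mul_of_nonneg_left hPle hck
      _ = c ^ k * Real.exp (1/2 - m) + c ^ k * (y₀ ^ (-k) + y₁ ^ (-k))
          + c ^ k * (z₀ ^ (-k) * z₁ ^ (-k)) := by ring
end

section
/- On a probability space let X₁, X₂ be independent standard normal random variables; fix ρ ∈ (−1, 1) and set Z₁ = X₁, Z₂ = ρX₁ + √(1−ρ²)X₂. Let ε₀, ε₁, ε₂ be i.i.d. nonnegative random variables with common cdf F_ε such that (X₁, X₂, ε₀, ε₁, ε₂) are mutually independent; assume F_ε is subexponential and that for every a > 1, F̄_ε(a·c)/F̄_ε(c) → 0 as c → ∞. Let α₁₀, α₂₀ > 0 and α₁, α₂ ≥ 0 with α₁₀ > α₁ and α₂₀ > α₂, and set Wᵢ = Zᵢ + αᵢ₀·ε₀ + αᵢ·εᵢ for i = 1, 2. Then P(W₁ > Q₁(1 − q), W₂ > Q₂(1 − q))/q → 1 as q → 0⁺; that is, (W₁, W₂) has upper tail dependence coefficient λ_U = 1. -/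
open MeasureTheory ProbabilityTheory Filter Set Real
open scoped ENNReal NNReal
set_option linter.unusedSectionVars false
set_option maxHeartbeats 1000000

section Aux
variable {Ω : Type*} [MeasureSpace Ω] [IsProbabilityMeasure (ℙ : Measure Ω)]

lemma UTD.surv_antitone (X : Ω → ℝ) :
    Antitone (fun t => (ℙ {ω | t < X ω}).toReal) := by
  intro a b hab
  apply ENNReal.toReal_mono (measure_ne_top _ _)
  exact measure_mono (fun ω hω => lt_of_le_of_lt hab hω)

lemma UTD.cdf_monotone (X : Ω → ℝ) :
    Monotone (fun t => (ℙ {ω | X ω ≤ t}).toReal) := by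
  intro a b hab
  apply ENNReal.toReal_mono (measure_ne_top _ _)
  exact measure_mono (fun ω hω => le_trans hω hab)

lemma UTD.compl_eq (X : Ω → ℝ) (hX : Measurable X) (t : ℝ) :
    (ℙ {ω | t < X ω}).toReal = 1 - (ℙ {ω | X ω ≤ t}).toReal := by
  have : {ω | t < X ω} = {ω | X ω ≤ t}ᶜ := by ext ω; simp
  rw [this, prob_compl_eq_one_sub (measurableSet_le hX measurable_const)]
  rw [ENNReal.toReal_sub_of_le prob_le_one ENNReal.one_ne_top]
  simp

lemma UTD.tendsto_real_of_nat {f : ℝ → ℝ} (hf : Antitone f) (h0 : ∀ t, 0 ≤ f t)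
    (h : Tendsto (fun n : ℕ => f n) atTop (nhds 0)) : Tendsto f atTop (nhds 0) := by
  have h1 : Tendsto (fun t : ℝ => f (⌊t⌋₊ : ℕ)) atTop (nhds 0) :=
    h.comp tendsto_nat_floor_atTop
  apply tendsto_of_tendsto_of_tendsto_of_le_of_le' (tendsto_const_nhds) h1
  · exact Eventually.of_forall (fun t => h0 t)
  · filter_upwards [eventually_ge_atTop (0:ℝ)] with t ht
    exact hf (Nat.floor_le ht)

lemma UTD.surv_tendsto_zero {X : Ω → ℝ} (hX : Measurable X) :
    Tendsto (fun t : ℝ => (ℙ {ω | t < X ω}).toReal) atTop (nhds 0) := by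
  apply UTD.tendsto_real_of_nat (UTD.surv_antitone X) (fun t => ENNReal.toReal_nonneg)
  have h1 : Tendsto (fun n : ℕ => ℙ {ω | (n:ℝ) < X ω}) atTop (nhds (ℙ (⋂ n : ℕ, {ω | (n:ℝ) < X ω}))) := by
    apply tendsto_measure_iInter_atTop
    · exact fun n => ((measurableSet_lt measurable_const hX)).nullMeasurableSet
    · intro a b hab ω hω
      have : (a:ℝ) ≤ (b:ℝ) := by exact_mod_cast hab
      exact lt_of_le_of_lt this hω
    · exact ⟨0, measure_ne_top _ _⟩
  have h2 : (⋂ n : ℕ, {ω | (n:ℝ) < X ω}) = ∅ := by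
    ext ω
    simp only [mem_iInter, mem_setOf_eq, mem_empty_iff_false, iff_false, not_forall, not_lt]
    obtain ⟨n, hn⟩ := exists_nat_ge (X ω)
    exact ⟨n, hn⟩
  rw [h2, measure_empty] at h1
  have := (ENNReal.tendsto_toReal (by simp)).comp h1
  simpa [Function.comp_def] using this

lemma UTD.cdf_tendsto_one {X : Ω → ℝ} (hX : Measurable X) :
    Tendsto (fun t : ℝ => (ℙ {ω | X ω ≤ t}).toReal) atTop (nhds 1) := by
  have h : ∀ t : ℝ, (ℙ {ω | X ω ≤ t}).toReal = 1 - (ℙ {ω | t < X ω}).toReal := by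
    intro t; rw [UTD.compl_eq X hX t]; ring
  simp_rw [h]
  have := (UTD.surv_tendsto_zero (Ω := Ω) (X := X) hX).const_sub 1
  simpa using this

lemma UTD.cdf_tendsto_zero {X : Ω → ℝ} (hX : Measurable X) :
    Tendsto (fun t : ℝ => (ℙ {ω | X ω ≤ t}).toReal) atBot (nhds 0) := by
  have key : Tendsto (fun t : ℝ => (ℙ {ω | X ω ≤ -t}).toReal) atTop (nhds 0) := by
    apply UTD.tendsto_real_of_nat
    · intro a b hab
      apply ENNReal.toReal_mono (measure_ne_top _ _)
      refine measure_mono (fun ω hω => ?_)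
      simp only [Set.mem_setOf_eq] at hω ⊢
      linarith
    · exact fun t => ENNReal.toReal_nonneg
    · have h1 : Tendsto (fun n : ℕ => ℙ {ω | X ω ≤ -(n:ℝ)}) atTop
          (nhds (ℙ (⋂ n : ℕ, {ω | X ω ≤ -(n:ℝ)}))) := by
        apply tendsto_measure_iInter_atTop
        · exact fun n => (measurableSet_le hX measurable_const).nullMeasurableSet
        · intro a b hab ω hω
          simp only [Set.mem_setOf_eq] at hω ⊢
          have : (a:ℝ) ≤ (b:ℝ) := by exact_mod_cast hab
          linarith
        · exact ⟨0, measure_ne_top _ _⟩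
      have h2 : (⋂ n : ℕ, {ω | X ω ≤ -(n:ℝ)}) = ∅ := by
        ext ω
        simp only [mem_iInter, mem_setOf_eq, mem_empty_iff_false, iff_false, not_forall, not_le]
        obtain ⟨n, hn⟩ := exists_nat_gt (-X ω)
        exact ⟨n, by linarith⟩
      rw [h2, measure_empty] at h1
      have := (ENNReal.tendsto_toReal (by simp)).comp h1
      simpa [Function.comp_def] using this
  have hneg : Tendsto (fun t : ℝ => -t) atBot (atTop : Filter ℝ) := tendsto_neg_atBot_atTop
  have h2 := key.comp hneg
  simp only [Function.comp_def] at h2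
  convert h2 using 2 with t
  simp

end Aux

section Aux2
variable {Ω : Type*} [MeasureSpace Ω] [IsProbabilityMeasure (ℙ : Measure Ω)]
variable {W : Ω → ℝ}


noncomputable def UTD.Qtl (W : Ω → ℝ) (p : ℝ) : ℝ :=
  sInf {z : ℝ | p ≤ (ℙ {ω | W ω ≤ z}).toReal}

lemma UTD.Qtl_set_nonempty (hW : Measurable W) {p : ℝ} (hp : p < 1) :
    {z : ℝ | p ≤ (ℙ {ω | W ω ≤ z}).toReal}.Nonempty := by
  have h := (UTD.cdf_tendsto_one (Ω := Ω) hW).eventually_const_le hp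
  obtain ⟨z, hz⟩ := h.exists
  exact ⟨z, hz⟩

lemma UTD.Qtl_set_bddBelow (hW : Measurable W) {p : ℝ} (hp : 0 < p) :
    ∃ z₀ : ℝ, ∀ z ∈ {z : ℝ | p ≤ (ℙ {ω | W ω ≤ z}).toReal}, z₀ < z := by
  have h := (UTD.cdf_tendsto_zero (Ω := Ω) hW).eventually_lt_const hp
  obtain ⟨z₀, hz₀⟩ := (eventually_atBot.1 h)
  refine ⟨z₀, fun z hz => ?_⟩
  by_contra hc
  push_neg at hc
  have := hz₀ z hc
  exact absurd hz (by simp only [mem_setOf_eq]; linarith)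

lemma UTD.Qtl_cdf_ge (hW : Measurable W) {p : ℝ} (hp0 : 0 < p) (hp1 : p < 1) :
    p ≤ (ℙ {ω | W ω ≤ UTD.Qtl W p}).toReal := by
  set S := {z : ℝ | p ≤ (ℙ {ω | W ω ≤ z}).toReal} with hS
  have hne : S.Nonempty := UTD.Qtl_set_nonempty hW hp1
  obtain ⟨z₀, hz₀⟩ := UTD.Qtl_set_bddBelow hW hp0
  have hbdd : BddBelow S := ⟨z₀, fun z hz => (hz₀ z hz).le⟩
  -- each n : F (Q + 1/(n+1)) ≥ p
  have key : ∀ n : ℕ, p ≤ (ℙ {ω | W ω ≤ UTD.Qtl W p + 1/(n+1)}).toReal := by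
    intro n
    obtain ⟨z, hzS, hzlt⟩ := Real.lt_sInf_add_pos hne (by positivity : (0:ℝ) < 1/(n+1))
    exact le_trans hzS (UTD.cdf_monotone W (le_of_lt hzlt))
  have hset : (⋂ n : ℕ, {ω | W ω ≤ UTD.Qtl W p + 1/(n+1)}) = {ω | W ω ≤ UTD.Qtl W p} := by
    ext ω
    simp only [mem_iInter, mem_setOf_eq]
    constructor
    · intro h
      refine le_of_forall_pos_le_add (fun ε hε => ?_)
      obtain ⟨n, hn⟩ := exists_nat_one_div_lt hε
      exact le_trans (h n) (by linarith)
    · intro h n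
      have hp : (0:ℝ) < 1/(n+1) := by positivity
      linarith
  have hmono : Antitone (fun n : ℕ => {ω | W ω ≤ UTD.Qtl W p + 1/(n+1)}) := by
    intro a b hab ω hω
    simp only [mem_setOf_eq] at hω ⊢
    have hab' : (a:ℝ) ≤ b := Nat.cast_le.mpr hab
    have h1 : (1:ℝ)/(b+1) ≤ 1/(a+1) := by
      apply one_div_le_one_div_of_le (by positivity)
      linarith
    linarith
  have h1 : Tendsto (fun n : ℕ => ℙ {ω | W ω ≤ UTD.Qtl W p + 1/(n+1)}) atTop
      (nhds (ℙ (⋂ n : ℕ, {ω | W ω ≤ UTD.Qtl W p + 1/(n+1)}))) := by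
    apply tendsto_measure_iInter_atTop
    · exact fun n => (measurableSet_le hW measurable_const).nullMeasurableSet
    · exact hmono
    · exact ⟨0, measure_ne_top _ _⟩
  rw [hset] at h1
  have h2 := (ENNReal.tendsto_toReal (measure_ne_top _ _)).comp h1
  exact ge_of_tendsto h2 (Eventually.of_forall key)

lemma UTD.Qtl_tail_ge (hW : Measurable W) {p : ℝ} (hp0 : 0 < p) (hp1 : p < 1) :
    1 - p ≤ (ℙ {ω | UTD.Qtl W p ≤ W ω}).toReal := by
  set S := {z : ℝ | p ≤ (ℙ {ω | W ω ≤ z}).toReal} with hS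
  have hne : S.Nonempty := UTD.Qtl_set_nonempty hW hp1
  obtain ⟨z₀, hz₀⟩ := UTD.Qtl_set_bddBelow hW hp0
  have hbdd : BddBelow S := ⟨z₀, fun z hz => (hz₀ z hz).le⟩
  have key : ∀ n : ℕ, 1 - p ≤ (ℙ {ω | UTD.Qtl W p - 1/(n+1) < W ω}).toReal := by
    intro n
    have hz : UTD.Qtl W p - 1/(n+1) ∉ S := by
      intro hmem
      have := csInf_le hbdd hmem
      have hpos : (0:ℝ) < 1/(n+1) := by positivity
      unfold UTD.Qtl at this
      linarith
    have hlt : (ℙ {ω | W ω ≤ UTD.Qtl W p - 1/(n+1)}).toReal < p := by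
      by_contra hc; push_neg at hc; exact hz hc
    rw [UTD.compl_eq W hW]
    linarith
  have hset : (⋂ n : ℕ, {ω | UTD.Qtl W p - 1/(n+1) < W ω}) = {ω | UTD.Qtl W p ≤ W ω} := by
    ext ω
    simp only [mem_iInter, mem_setOf_eq]
    constructor
    · intro h
      by_contra hc; push_neg at hc
      obtain ⟨n, hn⟩ := exists_nat_one_div_lt (by linarith : (0:ℝ) < UTD.Qtl W p - W ω)
      have := h n
      linarith
    · intro h n
      have hp : (0:ℝ) < 1/(n+1) := by positivity
      linarith
  have hmono : Antitone (fun n : ℕ => {ω | UTD.Qtl W p - 1/(n+1) < W ω}) := by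
    intro a b hab ω hω
    simp only [mem_setOf_eq] at hω ⊢
    have hab' : (a:ℝ) ≤ b := Nat.cast_le.mpr hab
    have h1 : (1:ℝ)/(b+1) ≤ 1/(a+1) := by
      apply one_div_le_one_div_of_le (by positivity)
      linarith
    linarith
  have h1 : Tendsto (fun n : ℕ => ℙ {ω | UTD.Qtl W p - 1/(n+1) < W ω}) atTop
      (nhds (ℙ (⋂ n : ℕ, {ω | UTD.Qtl W p - 1/(n+1) < W ω}))) := by
    apply tendsto_measure_iInter_atTop
    · exact fun n => (measurableSet_lt measurable_const hW).nullMeasurableSet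
    · exact hmono
    · exact ⟨0, measure_ne_top _ _⟩
  rw [hset] at h1
  have h2 := (ENNReal.tendsto_toReal (measure_ne_top _ _)).comp h1
  exact ge_of_tendsto h2 (Eventually.of_forall key)

lemma UTD.Qtl_tendsto_atTop (hW : Measurable W)
    (hlt1 : ∀ z : ℝ, (ℙ {ω | W ω ≤ z}).toReal < 1) :
    Tendsto (fun q : ℝ => UTD.Qtl W (1 - q)) (nhdsWithin 0 (Set.Ioi 0)) atTop := by
  rw [tendsto_atTop]
  intro M
  set δ := 1 - (ℙ {ω | W ω ≤ M}).toReal with hδ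
  have hδpos : 0 < δ := by have := hlt1 M; simp only [hδ]; linarith
  filter_upwards [Ioo_mem_nhdsGT_of_mem (by constructor <;> simp [hδpos] : (0:ℝ) ∈ Set.Ico 0 δ)] with q hq
  obtain ⟨hq0, hqδ⟩ := hq
  have hne := UTD.Qtl_set_nonempty (Ω := Ω) hW (by linarith : 1 - q < 1)
  apply le_csInf hne
  intro z hz
  simp only [mem_setOf_eq] at hz
  by_contra hc
  push_neg at hc
  have hmono := UTD.cdf_monotone (Ω := Ω) W hc.le
  simp only at hmono
  have hM := hlt1 M
  simp only [hδ] at hqδ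
  linarith

end Aux2

namespace UTD

lemma gaussian_pdf_shift (c x : ℝ) :
    Real.exp (c*x) * gaussianPDFReal 0 1 x = Real.exp (c^2/2) * gaussianPDFReal c 1 x := by
  simp only [gaussianPDFReal_def]
  push_cast
  calc Real.exp (c*x) * ((Real.sqrt (2*π*1))⁻¹ * Real.exp (-(x-0)^2/(2*1)))
      = (Real.sqrt (2*π*1))⁻¹ * (Real.exp (c*x) * Real.exp (-(x-0)^2/(2*1))) := by ring
    _ = (Real.sqrt (2*π*1))⁻¹ * Real.exp (c*x + -(x-0)^2/(2*1)) := by rw [Real.exp_add]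
    _ = (Real.sqrt (2*π*1))⁻¹ * Real.exp (c^2/2 + -(x-c)^2/(2*1)) := by ring_nf
    _ = (Real.sqrt (2*π*1))⁻¹ * (Real.exp (c^2/2) * Real.exp (-(x-c)^2/(2*1))) := by
        rw [Real.exp_add]
    _ = Real.exp (c^2/2) * ((Real.sqrt (2*π*1))⁻¹ * Real.exp (-(x-c)^2/(2*1))) := by ring

lemma exp_nnreal_pdf (x : ℝ) :
    gaussianPDF 0 1 x = (((gaussianPDFReal 0 1 x).toNNReal : ℝ≥0) : ℝ≥0∞) := by
  rw [gaussianPDF_def]; rfl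

lemma gaussian_integrable_exp (c : ℝ) :
    Integrable (fun x => Real.exp (c*x)) (gaussianReal 0 1) := by
  rw [gaussianReal_of_var_ne_zero 0 one_ne_zero]
  have hmeas : Measurable (fun x => (gaussianPDFReal 0 1 x).toNNReal) :=
    (measurable_gaussianPDFReal 0 1).real_toNNReal
  have hpdf : gaussianPDF 0 1 = (fun x => (((fun y => (gaussianPDFReal 0 1 y).toNNReal) x : ℝ≥0) : ℝ≥0∞)) := funext exp_nnreal_pdf
  rw [hpdf]
  rw [integrable_withDensity_iff_integrable_smul hmeas]
  have : (fun x => ((gaussianPDFReal 0 1 x).toNNReal : ℝ≥0) • Real.exp (c*x))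
      = fun x => Real.exp (c^2/2) * gaussianPDFReal c 1 x := by
    funext x
    rw [NNReal.smul_def, smul_eq_mul, Real.coe_toNNReal _ (gaussianPDFReal_nonneg 0 1 x)]
    rw [mul_comm]
    exact gaussian_pdf_shift c x
  rw [this]
  exact (integrable_gaussianPDFReal c 1).const_mul _

lemma gaussian_integral_exp (c : ℝ) :
    ∫ x, Real.exp (c*x) ∂(gaussianReal 0 1) = Real.exp (c^2/2) := by
  rw [gaussianReal_of_var_ne_zero 0 one_ne_zero]
  have hmeas : Measurable (fun x => (gaussianPDFReal 0 1 x).toNNReal) :=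
    (measurable_gaussianPDFReal 0 1).real_toNNReal
  have hpdf : gaussianPDF 0 1 = (fun x => (((fun y => (gaussianPDFReal 0 1 y).toNNReal) x : ℝ≥0) : ℝ≥0∞)) := funext exp_nnreal_pdf
  rw [hpdf]
  rw [integral_withDensity_eq_integral_smul hmeas]
  have : (fun x => ((gaussianPDFReal 0 1 x).toNNReal : ℝ≥0) • Real.exp (c*x))
      = fun x => Real.exp (c^2/2) * gaussianPDFReal c 1 x := by
    funext x
    rw [NNReal.smul_def, smul_eq_mul, Real.coe_toNNReal _ (gaussianPDFReal_nonneg 0 1 x)]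
    rw [mul_comm]
    exact gaussian_pdf_shift c x
  rw [this, integral_const_mul, integral_gaussianPDFReal_eq_one c one_ne_zero, mul_one]

end UTD

namespace UTD
variable {Ω : Type*} [MeasureSpace Ω] [IsProbabilityMeasure (ℙ : Measure Ω)]

lemma gaussianReal_pos {s : Set ℝ} (hs : MeasurableSet s) (hvol : volume s ≠ 0) :
    gaussianReal 0 1 s ≠ 0 := by
  rw [gaussianReal_of_var_ne_zero 0 one_ne_zero, withDensity_apply _ hs]
  intro h
  rw [setLIntegral_eq_zero_iff hs (measurable_gaussianPDF 0 1)] at h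
  apply hvol
  rw [measure_eq_zero_iff_ae_notMem]
  filter_upwards [h] with x hx
  intro hxs
  exact (gaussianPDF_pos 0 one_ne_zero x).ne' (hx hxs)

lemma exp_moment_comp {X : Ω → ℝ} (hX : Measurable X)
    (hlaw : Measure.map X ℙ = gaussianReal 0 1) (c : ℝ) :
    Integrable (fun ω => Real.exp (c * X ω)) ℙ ∧
      ∫ ω, Real.exp (c * X ω) ∂ℙ = Real.exp (c^2/2) := by
  have hg : AEStronglyMeasurable (fun x => Real.exp (c*x)) (Measure.map X ℙ) :=
    (Real.continuous_exp.comp (continuous_const.mul continuous_id)).aestronglyMeasurable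
  constructor
  · have h1 := gaussian_integrable_exp c
    rw [← hlaw] at h1
    exact (integrable_map_measure hg hX.aemeasurable).mp h1
  · have h2 : ∫ x, Real.exp (c*x) ∂(Measure.map X ℙ) = Real.exp (c^2/2) := by
      rw [hlaw]; exact gaussian_integral_exp c
    rw [integral_map hX.aemeasurable hg] at h2
    exact h2

lemma std_tail_bound {Z : Ω → ℝ}
    (hint : Integrable (fun ω => Real.exp (1 * Z ω)) ℙ)
    (hval : mgf Z ℙ 1 ≤ Real.exp (1/2)) (s : ℝ) :
    (ℙ {ω | s < Z ω}).toReal ≤ Real.exp (1/2) * Real.exp (-s) := by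
  have h1 : (ℙ {ω | s < Z ω}).toReal ≤ (ℙ {ω | s ≤ Z ω}).toReal := by
    apply ENNReal.toReal_mono (measure_ne_top _ _)
    exact measure_mono (fun ω hω => (le_of_lt hω : s ≤ Z ω))
  have h2 := measure_ge_le_exp_mul_mgf (μ := ℙ) (X := Z) s zero_le_one hint
  have h3 : Real.exp (-1 * s) * mgf Z ℙ 1 ≤ Real.exp (-s) * Real.exp (1/2) := by
    rw [neg_one_mul]
    exact mul_le_mul_of_nonneg_left hval (Real.exp_nonneg _)
  calc (ℙ {ω | s < Z ω}).toReal ≤ (ℙ {ω | s ≤ Z ω}).toReal := h1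
    _ ≤ Real.exp (-1 * s) * mgf Z ℙ 1 := h2
    _ ≤ Real.exp (-s) * Real.exp (1/2) := h3
    _ = Real.exp (1/2) * Real.exp (-s) := by ring

end UTD

section Aux5
variable {Ω : Type*} [MeasureSpace Ω] [IsProbabilityMeasure (ℙ : Measure Ω)]


lemma UTD.map_surv_eq {X Y : Ω → ℝ} (hX : Measurable X) (hY : Measurable Y)
    (h : Measure.map X ℙ = Measure.map Y ℙ) (t : ℝ) :
    ℙ {ω | t < X ω} = ℙ {ω | t < Y ω} := by
  have h1 : ℙ {ω | t < X ω} = (Measure.map X ℙ) (Ioi t) := by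
    rw [Measure.map_apply hX measurableSet_Ioi]; rfl
  have h2 : ℙ {ω | t < Y ω} = (Measure.map Y ℙ) (Ioi t) := by
    rw [Measure.map_apply hY measurableSet_Ioi]; rfl
  rw [h1, h2, h]

lemma UTD.longtail {ε₀ ε₁ ε₂ : Ω → ℝ}
    (hε₀ : Measurable ε₀) (hε₁ : Measurable ε₁) (hε₂ : Measurable ε₂)
    (hiid₁ : Measure.map ε₁ ℙ = Measure.map ε₀ ℙ)
    (hiid₂ : Measure.map ε₂ ℙ = Measure.map ε₀ ℙ)
    (hind : IndepFun ε₁ ε₂ ℙ)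
    {Fbar : ℝ → ℝ} (hFs : ∀ t, Fbar t = (ℙ {ω | t < ε₀ ω}).toReal)
    (hpos : ∀ t, 0 < Fbar t)
    (hsub : Tendsto (fun t : ℝ => (ℙ {ω | t < ε₁ ω + ε₂ ω}).toReal / Fbar t) atTop (nhds 2))
    (hnn₁ : ∀ ω, 0 ≤ ε₁ ω) (hnn₂ : ∀ ω, 0 ≤ ε₂ ω)
    {y : ℝ} (hy : 0 ≤ y) :
    Tendsto (fun t : ℝ => Fbar (t - y) / Fbar t) atTop (nhds 1) := by
  have hFanti : Antitone Fbar := by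
    intro a b hab; rw [hFs a, hFs b]; exact UTD.surv_antitone ε₀ hab
  have hF0 : Tendsto Fbar atTop (nhds 0) := by
    have := UTD.surv_tendsto_zero (Ω := Ω) hε₀
    simpa [← hFs] using this
  -- survival functions of ε₁, ε₂ agree with Fbar
  have hs1 : ∀ t, (ℙ {ω | t < ε₁ ω}).toReal = Fbar t := by
    intro t; rw [hFs, UTD.map_surv_eq hε₁ hε₀ hiid₁]
  have hs2 : ∀ t, (ℙ {ω | t < ε₂ ω}).toReal = Fbar t := by
    intro t; rw [hFs, UTD.map_surv_eq hε₂ hε₀ hiid₂]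
  -- key inequality for t > y
  have key : ∀ t : ℝ, y < t →
      Fbar t * (2 - Fbar y) + (Fbar y - Fbar t) * Fbar (t - y)
        ≤ (ℙ {ω | t < ε₁ ω + ε₂ ω}).toReal := by
    intro t hyt
    set A : Set Ω := {ω | t < ε₁ ω}
    set B : Set Ω := ε₁ ⁻¹' (Iic y) ∩ ε₂ ⁻¹' (Ioi t)
    set C : Set Ω := ε₁ ⁻¹' (Ioc y t) ∩ ε₂ ⁻¹' (Ioi (t - y))
    have hAm : MeasurableSet A := measurableSet_lt measurable_const hε₁
    have hBm : MeasurableSet B := (hε₁ measurableSet_Iic).inter (hε₂ measurableSet_Ioi)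
    have hCm : MeasurableSet C := (hε₁ measurableSet_Ioc).inter (hε₂ measurableSet_Ioi)
    have hsub1 : A ∪ B ∪ C ⊆ {ω | t < ε₁ ω + ε₂ ω} := by
      rintro ω (hω | hω)
      · rcases hω with hω | hω
        · have := hnn₂ ω
          have : t < ε₁ ω := hω
          simp only [mem_setOf_eq]
          linarith [hnn₂ ω]
        · obtain ⟨h1, h2⟩ := hω
          simp only [mem_preimage, mem_Iic] at h1
          simp only [mem_preimage, mem_Ioi] at h2
          simp only [mem_setOf_eq]
          linarith [hnn₁ ω]
      · obtain ⟨h1, h2⟩ := hω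
        simp only [mem_preimage, mem_Ioc] at h1
        simp only [mem_preimage, mem_Ioi] at h2
        simp only [mem_setOf_eq]
        linarith [h1.1]
    have hdisjAB : Disjoint A B := by
      rw [Set.disjoint_left]
      rintro ω hA ⟨h1, _⟩
      simp only [mem_preimage, mem_Iic] at h1
      have : t < ε₁ ω := hA
      linarith
    have hdisjAC : Disjoint A C := by
      rw [Set.disjoint_left]
      rintro ω hA ⟨h1, _⟩
      simp only [mem_preimage, mem_Ioc] at h1
      have : t < ε₁ ω := hA
      linarith [h1.2]
    have hdisjBC : Disjoint B C := by
      rw [Set.disjoint_left]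
      rintro ω ⟨h1, _⟩ ⟨h1', _⟩
      simp only [mem_preimage, mem_Iic] at h1
      simp only [mem_preimage, mem_Ioc] at h1'
      linarith [h1'.1]
    have hunion : ℙ (A ∪ B ∪ C) = ℙ A + ℙ B + ℙ C := by
      rw [measure_union (Set.disjoint_union_left.mpr ⟨hdisjAC, hdisjBC⟩) hCm, measure_union hdisjAB hBm]
    -- compute the pieces
    have hA : (ℙ A).toReal = Fbar t := hs1 t
    have hB : (ℙ B).toReal = (1 - Fbar y) * Fbar t := by
      have := (indepFun_iff_measure_inter_preimage_eq_mul.mp hind) (Iic y) (Ioi t)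
        measurableSet_Iic measurableSet_Ioi
      have hiy : (ℙ (ε₁ ⁻¹' (Iic y))).toReal = 1 - Fbar y := by
        have hcompl : ε₁ ⁻¹' (Iic y) = {ω | y < ε₁ ω}ᶜ := by
          ext ω; simp [not_lt]
        rw [hcompl, prob_compl_eq_one_sub (measurableSet_lt measurable_const hε₁),
          ENNReal.toReal_sub_of_le prob_le_one ENNReal.one_ne_top]
        simp [hs1 y]
      have hit : (ℙ (ε₂ ⁻¹' (Ioi t))).toReal = Fbar t := hs2 t
      calc (ℙ B).toReal = ((ℙ (ε₁ ⁻¹' (Iic y))) * (ℙ (ε₂ ⁻¹' (Ioi t)))).toReal := by rw [this]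
        _ = (ℙ (ε₁ ⁻¹' (Iic y))).toReal * (ℙ (ε₂ ⁻¹' (Ioi t))).toReal := ENNReal.toReal_mul
        _ = (1 - Fbar y) * Fbar t := by rw [hiy, hit]
    have hC : (ℙ C).toReal = (Fbar y - Fbar t) * Fbar (t - y) := by
      have := (indepFun_iff_measure_inter_preimage_eq_mul.mp hind) (Ioc y t) (Ioi (t - y))
        measurableSet_Ioc measurableSet_Ioi
      have hioc : (ℙ (ε₁ ⁻¹' (Ioc y t))).toReal = Fbar y - Fbar t := by
        have hsplit : ε₁ ⁻¹' (Ioc y t) = {ω | y < ε₁ ω} \ {ω | t < ε₁ ω} := by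
          ext ω; simp only [mem_preimage, mem_Ioc, mem_diff, mem_setOf_eq, not_lt]
        have hss : {ω | t < ε₁ ω} ⊆ {ω | y < ε₁ ω} := fun ω hω => lt_of_le_of_lt hyt.le hω
        rw [hsplit, measure_diff hss
          ((measurableSet_lt measurable_const hε₁).nullMeasurableSet) (measure_ne_top _ _),
          ENNReal.toReal_sub_of_le (measure_mono hss) (measure_ne_top _ _), hs1, hs1]
      have hit : (ℙ (ε₂ ⁻¹' (Ioi (t-y)))).toReal = Fbar (t-y) := hs2 (t-y)
      calc (ℙ C).toReal = ((ℙ (ε₁ ⁻¹' (Ioc y t))) * (ℙ (ε₂ ⁻¹' (Ioi (t-y))))).toReal := by rw [this]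
        _ = (ℙ (ε₁ ⁻¹' (Ioc y t))).toReal * (ℙ (ε₂ ⁻¹' (Ioi (t-y)))).toReal := ENNReal.toReal_mul
        _ = (Fbar y - Fbar t) * Fbar (t - y) := by rw [hioc, hit]
    have hle : (ℙ (A ∪ B ∪ C)).toReal ≤ (ℙ {ω | t < ε₁ ω + ε₂ ω}).toReal :=
      ENNReal.toReal_mono (measure_ne_top _ _) (measure_mono hsub1)
    have hsum : (ℙ (A ∪ B ∪ C)).toReal = (ℙ A).toReal + (ℙ B).toReal + (ℙ C).toReal := by
      rw [hunion, ENNReal.toReal_add (by finiteness) (by finiteness),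
        ENNReal.toReal_add (by finiteness) (by finiteness)]
    rw [hsum, hA, hB, hC] at hle
    calc Fbar t * (2 - Fbar y) + (Fbar y - Fbar t) * Fbar (t - y)
        = Fbar t + (1 - Fbar y) * Fbar t + (Fbar y - Fbar t) * Fbar (t - y) := by ring
      _ ≤ _ := hle
  -- now squeeze
  have hupper : Tendsto (fun t : ℝ =>
      ((ℙ {ω | t < ε₁ ω + ε₂ ω}).toReal / Fbar t - (2 - Fbar y)) / (Fbar y - Fbar t))
      atTop (nhds 1) := by
    have hnum : Tendsto (fun t : ℝ =>
        (ℙ {ω | t < ε₁ ω + ε₂ ω}).toReal / Fbar t - (2 - Fbar y)) atTop (nhds (Fbar y)) := by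
      have := hsub.sub_const (2 - Fbar y)
      simpa using this
    have hden : Tendsto (fun t : ℝ => Fbar y - Fbar t) atTop (nhds (Fbar y)) := by
      have := hF0.const_sub (Fbar y)
      simpa using this
    have := hnum.div hden (ne_of_gt (hpos y))
    simpa [div_self (ne_of_gt (hpos y)), Pi.div_def] using this
  apply tendsto_of_tendsto_of_tendsto_of_le_of_le' (tendsto_const_nhds) hupper
  · filter_upwards [] with t
    rw [le_div_iff₀ (hpos t)]
    have := hFanti (by linarith : t - y ≤ t)
    linarith
  · have hev : ∀ᶠ t : ℝ in atTop, Fbar t < Fbar y := by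
      have := hF0.eventually_lt_const (hpos y)
      exact this
    filter_upwards [hev, eventually_gt_atTop y] with t hFt hyt
    rw [div_le_div_iff₀ (hpos t) (by linarith : (0:ℝ) < Fbar y - Fbar t)]
    have hk := key t hyt
    have h2 : (ℙ {ω | t < ε₁ ω + ε₂ ω}).toReal / Fbar t * Fbar t
        = (ℙ {ω | t < ε₁ ω + ε₂ ω}).toReal := div_mul_cancel₀ _ (hpos t).ne'
    nlinarith [hpos t, hpos (t-y), hk]

end Aux5



lemma UTD.exp_lower {Fbar : ℝ → ℝ} (hFanti : Antitone Fbar) (hpos : ∀ t, 0 < Fbar t)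
    (hlt : Tendsto (fun t : ℝ => Fbar (t - 1) / Fbar t) atTop (nhds 1))
    {l : ℝ} (hl : 0 < l) :
    ∀ᶠ t : ℝ in atTop, Real.exp (-(l * t)) ≤ Fbar t := by
  set K := Real.exp (l/2) with hK
  have hK1 : 1 < K := by
    rw [hK, show (1:ℝ) = Real.exp 0 by simp]
    exact Real.exp_lt_exp.mpr (by linarith)
  have hev : ∀ᶠ t : ℝ in atTop, Fbar (t - 1) / Fbar t ≤ K := hlt.eventually_le_const hK1
  obtain ⟨T, hT⟩ := eventually_atTop.1 hev
  have hstep : ∀ t : ℝ, T ≤ t → Fbar (t - 1) ≤ K * Fbar t := by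
    intro t ht
    have := hT t ht
    rw [div_le_iff₀ (hpos t)] at this
    linarith [this]
  have claim : ∀ n : ℕ, ∀ t : ℝ, T ≤ t → t ≤ T + n → Fbar T * (K⁻¹)^n ≤ Fbar t := by
    intro n
    induction n with
    | zero =>
      intro t ht1 ht2
      simp only [Nat.cast_zero, add_zero] at ht2
      simpa using hFanti ht2
    | succ n ih =>
      intro t ht1 ht2
      by_cases hc : t ≤ T + n
      · have h1 := ih t ht1 hc
        have h2 : (K⁻¹)^(n+1) ≤ (K⁻¹)^n := by
          apply pow_le_pow_of_le_one (by positivity) _ (Nat.le_succ n)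
          rw [inv_le_one_iff₀]; right; linarith
        nlinarith [hpos T]
      · push_neg at hc
        have hst := hstep t ht1
        have hlow : Fbar T * (K⁻¹)^n ≤ Fbar (t - 1) := by
          by_cases hd : T ≤ t - 1
          · apply ih (t-1) hd
            push_cast at ht2 ⊢
            linarith
          · push_neg at hd
            have := hFanti hd.le
            calc Fbar T * (K⁻¹)^n ≤ Fbar T * 1 := by
                  apply mul_le_mul_of_nonneg_left _ (hpos T).le
                  apply pow_le_one₀ (by positivity)
                  rw [inv_le_one_iff₀]; right; linarith
              _ = Fbar T := mul_one _
              _ ≤ Fbar (t-1) := this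
        have hKpos : 0 < K := by positivity
        calc Fbar T * (K⁻¹)^(n+1) = (Fbar T * (K⁻¹)^n) * K⁻¹ := by ring
          _ ≤ Fbar (t - 1) * K⁻¹ := by
              apply mul_le_mul_of_nonneg_right hlow (by positivity)
          _ ≤ (K * Fbar t) * K⁻¹ := by
              apply mul_le_mul_of_nonneg_right hst (by positivity)
          _ = Fbar t := by field_simp
  set C := Fbar T * Real.exp (-(l/2)*(1 - T)) with hC
  have hCpos : 0 < C := mul_pos (hpos T) (Real.exp_pos _)
  have hmain : ∀ t : ℝ, T ≤ t → C * Real.exp (-(l/2)*t) ≤ Fbar t := by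
    intro t ht
    set n := ⌈t - T⌉₊ with hn
    have h1 : t ≤ T + n := by
      have := Nat.le_ceil (t - T)
      linarith
    have h2 := claim n t ht h1
    have h3 : (n:ℝ) < t - T + 1 := Nat.ceil_lt_add_one (by linarith)
    have h4 : (K⁻¹)^n = Real.exp (-(l/2)*n) := by
      rw [hK, ← Real.exp_neg, ← Real.exp_nat_mul]
      congr 1; ring
    have h5 : Real.exp (-(l/2)*n) ≥ Real.exp (-(l/2)*(t - T + 1)) := by
      apply Real.exp_le_exp.mpr
      nlinarith
    have h6 : C * Real.exp (-(l/2)*t) = Fbar T * Real.exp (-(l/2)*(t - T + 1)) := by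
      rw [hC, mul_assoc, ← Real.exp_add]
      congr 2; ring
    rw [h6]
    calc Fbar T * Real.exp (-(l/2)*(t-T+1)) ≤ Fbar T * Real.exp (-(l/2)*n) := by
          apply mul_le_mul_of_nonneg_left h5 (hpos T).le
      _ = Fbar T * (K⁻¹)^n := by rw [h4]
      _ ≤ Fbar t := h2
  have hfin : ∀ᶠ t : ℝ in atTop, Real.exp (-(l/2)*t) ≤ C := by
    have htd : Tendsto (fun t : ℝ => Real.exp (-(l/2)*t)) atTop (nhds 0) := by
      have h1 : Tendsto (fun t : ℝ => -(l/2)*t) atTop atBot := by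
        apply Tendsto.const_mul_atTop_of_neg (by linarith : -(l/2) < 0) tendsto_id
      exact Real.tendsto_exp_atBot.comp h1
    exact htd.eventually_le_const hCpos
  filter_upwards [eventually_ge_atTop T, hfin] with t h1 h2
  have : Real.exp (-(l*t)) = Real.exp (-(l/2)*t) * Real.exp (-(l/2)*t) := by
    rw [← Real.exp_add]; congr 1; ring
  rw [this]
  calc Real.exp (-(l/2)*t) * Real.exp (-(l/2)*t) ≤ C * Real.exp (-(l/2)*t) := by
        apply mul_le_mul_of_nonneg_right h2 (Real.exp_nonneg _)
    _ ≤ Fbar t := hmain t h1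


section Aux7
variable {Ω : Type*} [MeasureSpace Ω] [IsProbabilityMeasure (ℙ : Measure Ω)]


lemma UTD.light_tail {Z ε' : Ω → ℝ} (hZ : Measurable Z) (hε' : Measurable ε')
    {Fbar : ℝ → ℝ} (hpos : ∀ t, 0 < Fbar t) (hFanti : Antitone Fbar)
    (hlt : Tendsto (fun t : ℝ => Fbar (t - 1) / Fbar t) atTop (nhds 1))
    (hratio : ∀ a : ℝ, 1 < a →
      Tendsto (fun c : ℝ => Fbar (a * c) / Fbar c) atTop (nhds 0))
    {C : ℝ} (hCnn : 0 ≤ C)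
    (hZt : ∀ s : ℝ, (ℙ {ω | s < Z ω}).toReal ≤ C * Real.exp (-s))
    (hεt : ∀ t : ℝ, (ℙ {ω | t < ε' ω}).toReal = Fbar t)
    {αi0 αi : ℝ} (hαi0 : 0 < αi0) (hαi : 0 ≤ αi) (hlt' : αi < αi0)
    {η : ℝ} (hη : 0 < η) :
    ∀ᶠ u : ℝ in atTop, (ℙ {ω | u < Z ω + αi * ε' ω}).toReal ≤ η * Fbar (u / αi0) := by
  set δ : ℝ := (1 - αi/αi0)/2 with hδ
  have hδpos : 0 < δ := by
    have : αi/αi0 < 1 := (div_lt_one hαi0).mpr hlt'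
    rw [hδ]; linarith
  have hδlt : δ < 1 := by
    have : 0 ≤ αi/αi0 := div_nonneg hαi hαi0.le
    rw [hδ]; linarith
  -- composition: u ↦ u / αi0 tends to atTop
  have hcomp : Tendsto (fun u : ℝ => u / αi0) atTop atTop :=
    tendsto_id.atTop_div_const hαi0
  -- Term 1 eventual bound
  have hterm1 : ∀ᶠ u : ℝ in atTop,
      (ℙ {ω | δ * u < Z ω}).toReal ≤ (η/2) * Fbar (u / αi0) := by
    have hexp := UTD.exp_lower hFanti hpos hlt (by positivity : (0:ℝ) < δ * αi0 / 2)
    have hexp' := hcomp.eventually hexp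
    have hsmall : Tendsto (fun u : ℝ => C * Real.exp (-(δ*u/2))) atTop (nhds 0) := by
      have h1 : Tendsto (fun u : ℝ => -(δ*u/2)) atTop atBot := by
        apply tendsto_neg_atBot_iff.mpr
        apply Tendsto.atTop_div_const two_pos
        exact Tendsto.const_mul_atTop hδpos fun s hs => hs
      have := (Real.tendsto_exp_atBot.comp h1).const_mul C
      simpa using this
    have hsmall' := hsmall.eventually_le_const (by positivity : (0:ℝ) < η/2)
    filter_upwards [hexp', hsmall'] with u h1 h2
    have hq : Real.exp (-(δ * αi0 / 2 * (u / αi0))) = Real.exp (-(δ*u/2)) := by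
      congr 1; field_simp
    rw [hq] at h1
    calc (ℙ {ω | δ * u < Z ω}).toReal ≤ C * Real.exp (-(δ*u)) := hZt (δ*u)
      _ = (C * Real.exp (-(δ*u/2))) * Real.exp (-(δ*u/2)) := by
          rw [mul_assoc, ← Real.exp_add]; congr 2; ring
      _ ≤ (η/2) * Real.exp (-(δ*u/2)) := by
          apply mul_le_mul_of_nonneg_right h2 (Real.exp_nonneg _)
      _ ≤ (η/2) * Fbar (u / αi0) := by
          apply mul_le_mul_of_nonneg_left h1 (by positivity)
  -- Term 2 eventual bound
  have hterm2 : ∀ᶠ u : ℝ in atTop,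
      (ℙ {ω | (1-δ) * u < αi * ε' ω}).toReal ≤ (η/2) * Fbar (u / αi0) := by
    rcases eq_or_lt_of_le hαi with heq | hαipos
    · filter_upwards [eventually_ge_atTop (0:ℝ)] with u hu
      have : {ω | (1-δ) * u < αi * ε' ω} = ∅ := by
        ext ω
        simp only [mem_setOf_eq, mem_empty_iff_false, iff_false, not_lt, ← heq, zero_mul]
        exact mul_nonneg (by linarith) hu
      rw [this]
      simp only [measure_empty, ENNReal.toReal_zero]
      exact mul_nonneg (by linarith) (hpos _).le
    · set a : ℝ := (1-δ) * αi0 / αi with ha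
      have ha1 : 1 < a := by
        rw [ha, hδ]
        rw [lt_div_iff₀ hαipos]
        have h0 : (1 - (1 - αi/αi0)/2) = (1 + αi/αi0)/2 := by ring
        rw [h0]
        have : (1 + αi/αi0)/2 * αi0 = (αi0 + αi)/2 := by field_simp
        rw [this]
        linarith
      have hrat := (hratio a ha1).eventually_le_const (by positivity : (0:ℝ) < η/2)
      filter_upwards [hcomp.eventually hrat] with u h1
      have hval : a * (u/αi0) = (1-δ)*u/αi := by rw [ha]; field_simp
      have hset : {ω | (1-δ) * u < αi * ε' ω} = {ω | a * (u/αi0) < ε' ω} := by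
        ext ω
        simp only [mem_setOf_eq, hval, div_lt_iff₀ hαipos]
        constructor <;> intro h <;> linarith
      rw [hset, hεt]
      rw [div_le_iff₀ (hpos _)] at h1
      exact h1
  filter_upwards [hterm1, hterm2] with u h1 h2
  have hsub : {ω | u < Z ω + αi * ε' ω} ⊆ {ω | δ * u < Z ω} ∪ {ω | (1-δ) * u < αi * ε' ω} := by
    intro ω hω
    simp only [mem_setOf_eq, mem_union] at hω ⊢
    by_contra hc
    push_neg at hc
    obtain ⟨hc1, hc2⟩ := hc
    have : u = δ * u + (1-δ) * u := by ring
    linarith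
  calc (ℙ {ω | u < Z ω + αi * ε' ω}).toReal
      ≤ ((ℙ {ω | δ * u < Z ω}) + ℙ {ω | (1-δ) * u < αi * ε' ω}).toReal :=
        ENNReal.toReal_mono (by finiteness) (le_trans (measure_mono hsub) (measure_union_le _ _))
    _ = (ℙ {ω | δ * u < Z ω}).toReal + (ℙ {ω | (1-δ) * u < αi * ε' ω}).toReal :=
        ENNReal.toReal_add (by finiteness) (by finiteness)
    _ ≤ (η/2) * Fbar (u/αi0) + (η/2) * Fbar (u/αi0) := add_le_add h1 h2
    _ = η * Fbar (u/αi0) := by ring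


end Aux7

section Aux8
variable {Ω : Type*} [MeasureSpace Ω] [IsProbabilityMeasure (ℙ : Measure Ω)]


lemma UTD.ennreal_le_of_toReal {a b : ℝ≥0∞} (ha : a ≠ ⊤) (hb : b ≠ ⊤) {ε : ℝ} (hε : 0 ≤ ε)
    (h : a.toReal ≤ ε * b.toReal) : a ≤ ENNReal.ofReal ε * b := by
  rw [← ENNReal.ofReal_toReal ha, ← ENNReal.ofReal_toReal hb, ← ENNReal.ofReal_mul hε]
  exact ENNReal.ofReal_le_ofReal h

lemma UTD.fubini_dom {V U U' : Ω → ℝ} (hV : Measurable V) (hU : Measurable U) (hU' : Measurable U')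
    (hVU : IndepFun V U ℙ) (hVU' : IndepFun V U' ℙ) {g : ℝ → ℝ} (hg : Measurable g)
    {h : ℝ} {k : ℝ≥0∞} (hk : k ≠ ⊤)
    (hdom : ∀ u : ℝ, h ≤ u → ℙ {ω | u < U ω} ≤ k * ℙ {ω | u < U' ω}) :
    ℙ {ω | max h (g (V ω)) < U ω} ≤ k * ℙ {ω | max h (g (V ω)) < U' ω} := by
  set S : Set (ℝ × ℝ) := {p | max h (g p.1) < p.2} with hSdef
  have hS : MeasurableSet S :=
    measurableSet_lt (measurable_const.max (hg.comp measurable_fst)) measurable_snd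
  have hslice : ∀ x : ℝ, Prod.mk x ⁻¹' S = Ioi (max h (g x)) := by
    intro x; ext y; simp [hSdef, Ioi]
  have hmapU : Measure.map (fun ω => (V ω, U ω)) ℙ = (Measure.map V ℙ).prod (Measure.map U ℙ) :=
    (indepFun_iff_map_prod_eq_prod_map_map hV.aemeasurable hU.aemeasurable).mp hVU
  have hmapU' : Measure.map (fun ω => (V ω, U' ω)) ℙ = (Measure.map V ℙ).prod (Measure.map U' ℙ) :=
    (indepFun_iff_map_prod_eq_prod_map_map hV.aemeasurable hU'.aemeasurable).mp hVU'
  have e1 : ℙ {ω | max h (g (V ω)) < U ω} = ((Measure.map V ℙ).prod (Measure.map U ℙ)) S := by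
    rw [← hmapU, Measure.map_apply (hV.prodMk hU) hS]; rfl
  have e2 : ℙ {ω | max h (g (V ω)) < U' ω} = ((Measure.map V ℙ).prod (Measure.map U' ℙ)) S := by
    rw [← hmapU', Measure.map_apply (hV.prodMk hU') hS]; rfl
  rw [e1, e2, Measure.prod_apply hS, Measure.prod_apply hS]
  have hpt : ∀ x : ℝ, (Measure.map U ℙ) (Prod.mk x ⁻¹' S)
      ≤ k * (Measure.map U' ℙ) (Prod.mk x ⁻¹' S) := by
    intro x
    rw [hslice x]
    have hU1 : (Measure.map U ℙ) (Ioi (max h (g x))) = ℙ {ω | max h (g x) < U ω} := by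
      rw [Measure.map_apply hU measurableSet_Ioi]; rfl
    have hU2 : (Measure.map U' ℙ) (Ioi (max h (g x))) = ℙ {ω | max h (g x) < U' ω} := by
      rw [Measure.map_apply hU' measurableSet_Ioi]; rfl
    rw [hU1, hU2]
    exact hdom _ (le_max_left _ _)
  calc ∫⁻ x, (Measure.map U ℙ) (Prod.mk x ⁻¹' S) ∂(Measure.map V ℙ)
      ≤ ∫⁻ x, k * (Measure.map U' ℙ) (Prod.mk x ⁻¹' S) ∂(Measure.map V ℙ) :=
        lintegral_mono hpt
    _ = k * ∫⁻ x, (Measure.map U' ℙ) (Prod.mk x ⁻¹' S) ∂(Measure.map V ℙ) :=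
        lintegral_const_mul' k _ hk

lemma UTD.conv_upper {E Y EJ : Ω → ℝ}
    (hE : Measurable E) (hY : Measurable Y) (hEJ : Measurable EJ)
    (hindEY : IndepFun E Y ℙ) (hindEEJ : IndepFun E EJ ℙ)
    (hEJlaw : ∀ t : ℝ, ℙ {ω | t < EJ ω} = ℙ {ω | t < E ω})
    {Fbar : ℝ → ℝ} (hFs : ∀ t, Fbar t = (ℙ {ω | t < E ω}).toReal)
    (hpos : ∀ t, 0 < Fbar t) (hFanti : Antitone Fbar)
    (hlong : ∀ y : ℝ, 0 ≤ y → Tendsto (fun t : ℝ => Fbar (t - y) / Fbar t) atTop (nhds 1))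
    {α0 : ℝ} (hα0 : 0 < α0)
    (hlightY : ∀ η : ℝ, 0 < η → ∀ᶠ u : ℝ in atTop, (ℙ {ω | u < Y ω}).toReal ≤ η * Fbar (u/α0))
    (hconv : ∀ᶠ s : ℝ in atTop, (ℙ {ω | s < E ω + EJ ω}).toReal ≤ 3 * Fbar s)
    {η : ℝ} (hη : 0 < η) :
    ∀ᶠ t : ℝ in atTop, (ℙ {ω | t ≤ α0 * E ω + Y ω}).toReal ≤ (1+η) * Fbar (t/α0) := by
  have hcompdiv : Tendsto (fun t : ℝ => t / α0) atTop atTop :=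
    tendsto_id.atTop_div_const hα0
  have hcompdiv1 : Tendsto (fun t : ℝ => (t-1) / α0) atTop atTop :=
    (tendsto_atTop_add_const_right atTop (-1) tendsto_id).atTop_div_const hα0
  set ε' : ℝ := η/12 with hε'
  have hε'pos : 0 < ε' := by rw [hε']; linarith
  -- choose h ≥ 0 with domination
  obtain ⟨h₀, hh₀⟩ := eventually_atTop.1 (hlightY ε' hε'pos)
  set h : ℝ := max h₀ 0 with hh
  have hhnn : 0 ≤ h := le_max_right _ _
  have hdomR : ∀ u : ℝ, h ≤ u → (ℙ {ω | u < Y ω}).toReal ≤ ε' * Fbar (u/α0) :=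
    fun u hu => hh₀ u (le_trans (le_max_left _ _) hu)
  -- ENNReal domination against α0 * EJ
  have hdomE : ∀ u : ℝ, h ≤ u →
      ℙ {ω | u < Y ω} ≤ ENNReal.ofReal ε' * ℙ {ω | u < α0 * EJ ω} := by
    intro u hu
    have hset : {ω | u < α0 * EJ ω} = {ω | u/α0 < EJ ω} := by
      ext ω; simp only [mem_setOf_eq]
      rw [div_lt_iff₀ hα0, mul_comm]
    have : (ℙ {ω | u < α0 * EJ ω}).toReal = Fbar (u/α0) := by
      rw [hset, hEJlaw, ← hFs]
    apply UTD.ennreal_le_of_toReal (measure_ne_top _ _) (measure_ne_top _ _) hε'pos.le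
    rw [this]
    exact hdomR u hu
  -- eventual bounds from long-tailedness
  have hlongA := ((hlong ((h+1)/α0) (by positivity)).eventually_le_const
    (by linarith : (1:ℝ) < 1 + η/2)).filter_mono (map_mono le_rfl)
  have hA_ev : ∀ᶠ t : ℝ in atTop, Fbar (t/α0 - (h+1)/α0) ≤ (1+η/2) * Fbar (t/α0) := by
    filter_upwards [hcompdiv.eventually ((hlong ((h+1)/α0) (by positivity)).eventually_le_const
      (by linarith : (1:ℝ) < 1 + η/2))] with t ht
    rw [div_le_iff₀ (hpos _)] at ht
    exact ht
  have hB_ev : ∀ᶠ t : ℝ in atTop, Fbar ((t-1)/α0) ≤ 2 * Fbar (t/α0) := by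
    have h1 : ∀ᶠ t : ℝ in atTop, Fbar (t/α0 - 1/α0) ≤ 2 * Fbar (t/α0) := by
      filter_upwards [hcompdiv.eventually ((hlong (1/α0) (by positivity)).eventually_le_const
        (by linarith : (1:ℝ) < 2))] with t ht
      rw [div_le_iff₀ (hpos _)] at ht
      exact ht
    filter_upwards [h1] with t ht
    have : (t-1)/α0 = t/α0 - 1/α0 := by ring
    rw [this]
    exact ht
  have hconv_ev : ∀ᶠ t : ℝ in atTop,
      (ℙ {ω | (t-1)/α0 < E ω + EJ ω}).toReal ≤ 3 * Fbar ((t-1)/α0) :=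
    hcompdiv1.eventually hconv
  filter_upwards [hA_ev, hB_ev, hconv_ev] with t hA hB hC
  -- split the event
  set B : Set Ω := {ω | max h (t - 1 - α0 * E ω) < Y ω} with hBdef
  have hsplit : {ω | t ≤ α0 * E ω + Y ω} ⊆ {ω | (t-h-1)/α0 < E ω} ∪ B := by
    intro ω hω
    simp only [mem_setOf_eq] at hω
    by_cases hcase : Y ω ≤ h
    · left
      simp only [mem_setOf_eq]
      rw [div_lt_iff₀ hα0]
      nlinarith
    · right
      push_neg at hcase
      simp only [hBdef, mem_setOf_eq, max_lt_iff]
      exact ⟨hcase, by linarith⟩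
  -- bound B via fubini_dom
  have hBle : ℙ B ≤ ENNReal.ofReal ε' * ℙ {ω | (t-1)/α0 < E ω + EJ ω} := by
    have hg : Measurable (fun a : ℝ => t - 1 - α0 * a) :=
      (measurable_const.sub (measurable_const.mul measurable_id))
    have hfub := UTD.fubini_dom hE hY (hEJ.const_mul α0) hindEY
      (hindEEJ.comp measurable_id (measurable_const_mul α0)) hg
      ENNReal.ofReal_ne_top hdomE
    refine le_trans hfub ?_
    apply mul_le_mul_right
    apply measure_mono
    intro ω hω
    simp only [mem_setOf_eq, max_lt_iff] at hω ⊢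
    obtain ⟨_, h2⟩ := hω
    rw [div_lt_iff₀ hα0]
    nlinarith
  -- assemble in toReal
  have htotal : (ℙ {ω | t ≤ α0 * E ω + Y ω}).toReal
      ≤ (ℙ {ω | (t-h-1)/α0 < E ω}).toReal + (ℙ B).toReal := by
    calc (ℙ {ω | t ≤ α0 * E ω + Y ω}).toReal
        ≤ ((ℙ {ω | (t-h-1)/α0 < E ω}) + ℙ B).toReal :=
          ENNReal.toReal_mono (by finiteness)
            (le_trans (measure_mono hsplit) (measure_union_le _ _))
      _ = _ := ENNReal.toReal_add (by finiteness) (by finiteness)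
  have hAbound : (ℙ {ω | (t-h-1)/α0 < E ω}).toReal ≤ (1+η/2) * Fbar (t/α0) := by
    rw [← hFs]
    have : (t-h-1)/α0 = t/α0 - (h+1)/α0 := by ring
    rw [this]
    exact hA
  have hBbound : (ℙ B).toReal ≤ ε' * (3 * (2 * Fbar (t/α0))) := by
    have h1 : (ℙ B).toReal ≤ ε' * (ℙ {ω | (t-1)/α0 < E ω + EJ ω}).toReal := by
      have := ENNReal.toReal_mono (by finiteness) hBle
      rwa [ENNReal.toReal_mul, ENNReal.toReal_ofReal hε'pos.le] at this
    calc (ℙ B).toReal ≤ ε' * (ℙ {ω | (t-1)/α0 < E ω + EJ ω}).toReal := h1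
      _ ≤ ε' * (3 * Fbar ((t-1)/α0)) := by
          apply mul_le_mul_of_nonneg_left hC hε'pos.le
      _ ≤ ε' * (3 * (2 * Fbar (t/α0))) := by
          apply mul_le_mul_of_nonneg_left _ hε'pos.le
          apply mul_le_mul_of_nonneg_left hB (by norm_num)
  calc (ℙ {ω | t ≤ α0 * E ω + Y ω}).toReal
      ≤ (1+η/2) * Fbar (t/α0) + ε' * (3 * (2 * Fbar (t/α0))) := by
        have := htotal
        linarith [hAbound, hBbound]
    _ = (1+η) * Fbar (t/α0) := by rw [hε']; ring


end Aux8

section Aux9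
variable {Ω : Type*} [MeasureSpace Ω] [IsProbabilityMeasure (ℙ : Measure Ω)]


lemma UTD.pair_law {A B A' B' : Ω → ℝ}
    (hA : Measurable A) (hB : Measurable B) (hA' : Measurable A') (hB' : Measurable B')
    (hAB : IndepFun A B ℙ) (hA'B' : IndepFun A' B' ℙ)
    (h1 : Measure.map A' ℙ = Measure.map A ℙ) (h2 : Measure.map B' ℙ = Measure.map B ℙ)
    (s : ℝ) : ℙ {ω | s < A ω + B ω} = ℙ {ω | s < A' ω + B' ω} := by
  have hmap1 : Measure.map (fun ω => (A ω, B ω)) ℙ = (Measure.map A ℙ).prod (Measure.map B ℙ) :=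
    (indepFun_iff_map_prod_eq_prod_map_map hA.aemeasurable hB.aemeasurable).mp hAB
  have hmap2 : Measure.map (fun ω => (A' ω, B' ω)) ℙ =
      (Measure.map A' ℙ).prod (Measure.map B' ℙ) :=
    (indepFun_iff_map_prod_eq_prod_map_map hA'.aemeasurable hB'.aemeasurable).mp hA'B'
  set S : Set (ℝ × ℝ) := {p | s < p.1 + p.2} with hSdef
  have hS : MeasurableSet S := measurableSet_lt measurable_const (measurable_fst.add measurable_snd)
  have e1 : ℙ {ω | s < A ω + B ω} = (Measure.map (fun ω => (A ω, B ω)) ℙ) S := by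
    rw [Measure.map_apply (hA.prodMk hB) hS]; rfl
  have e2 : ℙ {ω | s < A' ω + B' ω} = (Measure.map (fun ω => (A' ω, B' ω)) ℙ) S := by
    rw [Measure.map_apply (hA'.prodMk hB') hS]; rfl
  rw [e1, e2, hmap1, hmap2, h1, h2]


end Aux9
theorem full_upper_tail_dependence_subexponential_factors
    {Ω : Type*} [MeasureSpace Ω] [IsProbabilityMeasure (ℙ : Measure Ω)]
    (X₁ X₂ ε₀ ε₁ ε₂ : Ω → ℝ)
    (hX₁ : Measurable X₁) (hX₂ : Measurable X₂)
    (hε₀ : Measurable ε₀) (hε₁ : Measurable ε₁) (hε₂ : Measurable ε₂)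
    (hlawX₁ : Measure.map X₁ ℙ = gaussianReal 0 1)
    (hlawX₂ : Measure.map X₂ ℙ = gaussianReal 0 1)
    (hnn₀ : ∀ ω, 0 ≤ ε₀ ω) (hnn₁ : ∀ ω, 0 ≤ ε₁ ω) (hnn₂ : ∀ ω, 0 ≤ ε₂ ω)
    (hiid₁ : Measure.map ε₁ ℙ = Measure.map ε₀ ℙ)
    (hiid₂ : Measure.map ε₂ ℙ = Measure.map ε₀ ℙ)
    (hindep : iIndepFun ![X₁, X₂, ε₀, ε₁, ε₂] ℙ)
    (Fε Fbar : ℝ → ℝ)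
    (hFε : ∀ t, Fε t = (ℙ {ω | ε₀ ω ≤ t}).toReal)
    (hFbar : ∀ t, Fbar t = 1 - Fε t)
    (hFbarpos : ∀ t, 0 < Fbar t)
    (hsubexp : Tendsto (fun t : ℝ => (ℙ {ω | t < ε₁ ω + ε₂ ω}).toReal / Fbar t)
      atTop (nhds 2))
    (hratio : ∀ a : ℝ, 1 < a →
      Tendsto (fun c : ℝ => Fbar (a * c) / Fbar c) atTop (nhds 0))
    (ρ : ℝ) (hρ : ρ ∈ Set.Ioo (-1 : ℝ) 1)
    (Z₁ Z₂ : Ω → ℝ) (hZ₁ : Z₁ = X₁)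
    (hZ₂ : Z₂ = fun ω => ρ * X₁ ω + Real.sqrt (1 - ρ ^ 2) * X₂ ω)
    (α₁₀ α₂₀ α₁ α₂ : ℝ) (hα₁₀ : 0 < α₁₀) (hα₂₀ : 0 < α₂₀) (hα₁ : 0 ≤ α₁) (hα₂ : 0 ≤ α₂)
    (W₁ W₂ : Ω → ℝ)
    (hW₁ : W₁ = fun ω => Z₁ ω + α₁₀ * ε₀ ω + α₁ * ε₁ ω)
    (hW₂ : W₂ = fun ω => Z₂ ω + α₂₀ * ε₀ ω + α₂ * ε₂ ω)
    (hgt₁ : α₁ < α₁₀) (hgt₂ : α₂ < α₂₀)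
    (Q₁ Q₂ : ℝ → ℝ)
    (hQ₁ : ∀ p, Q₁ p = sInf {z : ℝ | p ≤ (ℙ {ω | W₁ ω ≤ z}).toReal})
    (hQ₂ : ∀ p, Q₂ p = sInf {z : ℝ | p ≤ (ℙ {ω | W₂ ω ≤ z}).toReal}) :
    Tendsto (fun q : ℝ =>
        (ℙ {ω | Q₁ (1 - q) < W₁ ω ∧ Q₂ (1 - q) < W₂ ω}).toReal / q)
      (nhdsWithin 0 (Set.Ioi 0)) (nhds 1) := by
  obtain ⟨hρ1, hρ2⟩ := hρ
  set sq : ℝ := Real.sqrt (1 - ρ^2) with hsqdef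
  have hρsq : ρ^2 < 1 := by
    have h := mul_pos (by linarith : (0:ℝ) < 1-ρ) (by linarith : (0:ℝ) < 1+ρ)
    nlinarith [h]
  have hsqsq : sq^2 = 1 - ρ^2 := Real.sq_sqrt (by linarith)
  have hsqpos : 0 < sq := Real.sqrt_pos.mpr (by linarith)
  -- measurability
  have hZ₁m : Measurable Z₁ := by rw [hZ₁]; exact hX₁
  have hZ₂m : Measurable Z₂ := by rw [hZ₂]; exact (hX₁.const_mul ρ).add (hX₂.const_mul _)
  set Y₁ : Ω → ℝ := fun ω => Z₁ ω + α₁ * ε₁ ω with hY₁def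
  set Y₂ : Ω → ℝ := fun ω => Z₂ ω + α₂ * ε₂ ω with hY₂def
  have hY₁m : Measurable Y₁ := hZ₁m.add (hε₁.const_mul α₁)
  have hY₂m : Measurable Y₂ := hZ₂m.add (hε₂.const_mul α₂)
  have hW₁m : Measurable W₁ := by rw [hW₁]; exact (hZ₁m.add (hε₀.const_mul α₁₀)).add (hε₁.const_mul α₁)
  have hW₂m : Measurable W₂ := by rw [hW₂]; exact (hZ₂m.add (hε₀.const_mul α₂₀)).add (hε₂.const_mul α₂)
  -- Fbar basics
  have hFs : ∀ t, Fbar t = (ℙ {ω | t < ε₀ ω}).toReal := by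
    intro t; rw [hFbar t, hFε t]; exact (UTD.compl_eq ε₀ hε₀ t).symm
  have hFanti : Antitone Fbar := by
    intro a b hab; rw [hFs a, hFs b]; exact UTD.surv_antitone ε₀ hab
  have hFle1 : ∀ t, Fbar t ≤ 1 := by
    intro t; rw [hFs t]
    exact ENNReal.toReal_le_of_le_ofReal zero_le_one (by simpa using prob_le_one)
  -- independence extractions
  have hFmeas : ∀ i, Measurable (![X₁, X₂, ε₀, ε₁, ε₂] i) := by
    intro i; fin_cases i <;> simpa
  have hind12 : IndepFun ε₁ ε₂ ℙ := by
    have := hindep.indepFun (show (3 : Fin 5) ≠ 4 by decide); simpa using this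
  have hindX12 : IndepFun X₁ X₂ ℙ := by
    have := hindep.indepFun (show (0 : Fin 5) ≠ 1 by decide); simpa using this
  have hind01 : IndepFun ε₀ ε₁ ℙ := by
    have := hindep.indepFun (show (2 : Fin 5) ≠ 3 by decide); simpa using this
  have hind02 : IndepFun ε₀ ε₂ ℙ := by
    have := hindep.indepFun (show (2 : Fin 5) ≠ 4 by decide); simpa using this
  have hindE_Y₁ : IndepFun ε₀ Y₁ ℙ := by
    have hbase := hindep.indepFun_finset {2} {0,3} (by decide) hFmeas
    have hφ : Measurable (fun v : ((i : ({2} : Finset (Fin 5))) → ℝ) => v ⟨2, by decide⟩) :=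
      measurable_pi_apply _
    have hψ : Measurable (fun v : ((i : ({0,3} : Finset (Fin 5))) → ℝ) =>
        v ⟨0, by decide⟩ + α₁ * v ⟨3, by decide⟩) :=
      (measurable_pi_apply _).add ((measurable_pi_apply _).const_mul _)
    have h := hbase.comp hφ hψ
    rw [hY₁def, hZ₁]
    exact h
  have hindE_Y₂ : IndepFun ε₀ Y₂ ℙ := by
    have hbase := hindep.indepFun_finset {2} {0,1,4} (by decide) hFmeas
    have hφ : Measurable (fun v : ((i : ({2} : Finset (Fin 5))) → ℝ) => v ⟨2, by decide⟩) :=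
      measurable_pi_apply _
    have hψ : Measurable (fun v : ((i : ({0,1,4} : Finset (Fin 5))) → ℝ) =>
        (ρ * v ⟨0, by decide⟩ + sq * v ⟨1, by decide⟩) + α₂ * v ⟨4, by decide⟩) :=
      by fun_prop
    have h := hbase.comp hφ hψ
    rw [hY₂def, hZ₂]
    exact h
  have hindE_pair : IndepFun ε₀ (fun ω => (Y₁ ω, Y₂ ω)) ℙ := by
    have hbase := hindep.indepFun_finset {2} {0,1,3,4} (by decide) hFmeas
    have hφ : Measurable (fun v : ((i : ({2} : Finset (Fin 5))) → ℝ) => v ⟨2, by decide⟩) :=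
      measurable_pi_apply _
    have hψ : Measurable (fun v : ((i : ({0,1,3,4} : Finset (Fin 5))) → ℝ) =>
        (v ⟨0, by decide⟩ + α₁ * v ⟨3, by decide⟩,
         (ρ * v ⟨0, by decide⟩ + sq * v ⟨1, by decide⟩) + α₂ * v ⟨4, by decide⟩)) :=
      by fun_prop
    have h := hbase.comp hφ hψ
    rw [hY₁def, hY₂def, hZ₁, hZ₂]
    exact h
  
  -- survival law transfer
  have hs1 : ∀ t, (ℙ {ω | t < ε₁ ω}).toReal = Fbar t := by
    intro t; rw [hFs, UTD.map_surv_eq hε₁ hε₀ hiid₁]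
  have hs2 : ∀ t, (ℙ {ω | t < ε₂ ω}).toReal = Fbar t := by
    intro t; rw [hFs, UTD.map_surv_eq hε₂ hε₀ hiid₂]
  have hEJlaw₁ : ∀ t : ℝ, ℙ {ω | t < ε₁ ω} = ℙ {ω | t < ε₀ ω} :=
    fun t => UTD.map_surv_eq hε₁ hε₀ hiid₁ t
  have hEJlaw₂ : ∀ t : ℝ, ℙ {ω | t < ε₂ ω} = ℙ {ω | t < ε₀ ω} :=
    fun t => UTD.map_surv_eq hε₂ hε₀ hiid₂ t
  -- long-tailedness
  have hlong : ∀ y : ℝ, 0 ≤ y → Tendsto (fun t : ℝ => Fbar (t - y) / Fbar t) atTop (nhds 1) :=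
    fun y hy => UTD.longtail hε₀ hε₁ hε₂ hiid₁ hiid₂ hind12 hFs hFbarpos hsubexp hnn₁ hnn₂ hy
  have hlt1t := hlong 1 zero_le_one
  -- gaussian tail bounds
  have hmom₁ := fun c => UTD.exp_moment_comp hX₁ hlawX₁ c
  have hmom₂ := fun c => UTD.exp_moment_comp hX₂ hlawX₂ c
  have hZ₁tail : ∀ s : ℝ, (ℙ {ω | s < Z₁ ω}).toReal ≤ Real.exp (1/2) * Real.exp (-s) := by
    intro s
    rw [hZ₁]
    apply UTD.std_tail_bound (hmom₁ 1).1
    show (∫ ω, Real.exp (1 * X₁ ω) ∂ℙ) ≤ Real.exp (1/2)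
    rw [(hmom₁ 1).2]
    norm_num
  have hZ₂tail : ∀ s : ℝ, (ℙ {ω | s < Z₂ ω}).toReal ≤ Real.exp (1/2) * Real.exp (-s) := by
    have hABind : IndepFun (fun ω => ρ * X₁ ω) (fun ω => sq * X₂ ω) ℙ :=
      hindX12.comp (measurable_const_mul ρ) (measurable_const_mul sq)
    have hintA : Integrable (fun ω => Real.exp (1 * (ρ * X₁ ω))) ℙ := by
      simpa using (hmom₁ ρ).1
    have hintB : Integrable (fun ω => Real.exp (1 * (sq * X₂ ω))) ℙ := by
      simpa using (hmom₂ sq).1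
    have hZeq : Z₂ = (fun ω => ρ * X₁ ω) + (fun ω => sq * X₂ ω) := by
      rw [hZ₂]; rfl
    have hmgfA : mgf (fun ω => ρ * X₁ ω) ℙ 1 = Real.exp (ρ^2/2) := by
      show (∫ ω, Real.exp (1 * (ρ * X₁ ω)) ∂ℙ) = _
      simp only [one_mul]
      exact (hmom₁ ρ).2
    have hmgfB : mgf (fun ω => sq * X₂ ω) ℙ 1 = Real.exp (sq^2/2) := by
      show (∫ ω, Real.exp (1 * (sq * X₂ ω)) ∂ℙ) = _
      simp only [one_mul]
      exact (hmom₂ sq).2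
    have hmgfZ : mgf Z₂ ℙ 1 ≤ Real.exp (1/2) := by
      rw [hZeq, hABind.mgf_add' (hX₁.const_mul ρ).aestronglyMeasurable
        (hX₂.const_mul sq).aestronglyMeasurable, hmgfA, hmgfB, ← Real.exp_add]
      apply le_of_eq
      congr 1
      rw [hsqsq]; ring
    intro s
    apply UTD.std_tail_bound _ hmgfZ
    rw [hZeq]
    exact hABind.integrable_exp_mul_add hintA hintB
  -- light tails
  have hlight₁ : ∀ η : ℝ, 0 < η →
      ∀ᶠ u : ℝ in atTop, (ℙ {ω | u < Y₁ ω}).toReal ≤ η * Fbar (u/α₁₀) := by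
    intro η hη
    exact UTD.light_tail hZ₁m hε₁ hFbarpos hFanti hlt1t hratio (Real.exp_nonneg (1/2))
      hZ₁tail hs1 hα₁₀ hα₁ hgt₁ hη
  have hlight₂ : ∀ η : ℝ, 0 < η →
      ∀ᶠ u : ℝ in atTop, (ℙ {ω | u < Y₂ ω}).toReal ≤ η * Fbar (u/α₂₀) := by
    intro η hη
    exact UTD.light_tail hZ₂m hε₂ hFbarpos hFanti hlt1t hratio (Real.exp_nonneg (1/2))
      hZ₂tail hs2 hα₂₀ hα₂ hgt₂ hη
  -- convolution tail control
  have hconv_ev : ∀ᶠ s : ℝ in atTop, (ℙ {ω | s < ε₁ ω + ε₂ ω}).toReal ≤ 3 * Fbar s := by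
    filter_upwards [hsubexp.eventually_le_const (by norm_num : (2:ℝ) < 3)] with s hs
    rw [div_le_iff₀ (hFbarpos s)] at hs
    linarith
  have hpair₂ : ∀ s : ℝ, ℙ {ω | s < ε₀ ω + ε₂ ω} = ℙ {ω | s < ε₁ ω + ε₂ ω} :=
    fun s => UTD.pair_law hε₀ hε₂ hε₁ hε₂ hind02 hind12 hiid₁ rfl s
  have hpair₁ : ∀ s : ℝ, ℙ {ω | s < ε₀ ω + ε₁ ω} = ℙ {ω | s < ε₁ ω + ε₂ ω} :=
    fun s => UTD.pair_law hε₀ hε₁ hε₁ hε₂ hind01 hind12 hiid₁ (hiid₂.trans hiid₁.symm) s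
  have hconv₂ : ∀ᶠ s : ℝ in atTop, (ℙ {ω | s < ε₀ ω + ε₂ ω}).toReal ≤ 3 * Fbar s := by
    filter_upwards [hconv_ev] with s hs
    rw [hpair₂ s]; exact hs
  have hconv₁ : ∀ᶠ s : ℝ in atTop, (ℙ {ω | s < ε₀ ω + ε₁ ω}).toReal ≤ 3 * Fbar s := by
    filter_upwards [hconv_ev] with s hs
    rw [hpair₁ s]; exact hs
  -- upper bounds for W tails
  have hup₁ : ∀ η : ℝ, 0 < η →
      ∀ᶠ t : ℝ in atTop, (ℙ {ω | t ≤ W₁ ω}).toReal ≤ (1+η) * Fbar (t/α₁₀) := by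
    intro η hη
    have h := UTD.conv_upper hε₀ hY₁m hε₂ hindE_Y₁ hind02 hEJlaw₂ hFs hFbarpos hFanti
      hlong hα₁₀ hlight₁ hconv₂ hη
    filter_upwards [h] with t ht
    have hseteq : {ω | t ≤ W₁ ω} = {ω | t ≤ α₁₀ * ε₀ ω + Y₁ ω} := by
      ext ω
      rw [hW₁]
      simp only [hY₁def, mem_setOf_eq]
      constructor <;> intro <;> linarith
    rw [hseteq]; exact ht
  have hup₂ : ∀ η : ℝ, 0 < η →
      ∀ᶠ t : ℝ in atTop, (ℙ {ω | t ≤ W₂ ω}).toReal ≤ (1+η) * Fbar (t/α₂₀) := by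
    intro η hη
    have h := UTD.conv_upper hε₀ hY₂m hε₁ hindE_Y₂ hind01 hEJlaw₁ hFs hFbarpos hFanti
      hlong hα₂₀ hlight₂ hconv₁ hη
    filter_upwards [h] with t ht
    have hseteq : {ω | t ≤ W₂ ω} = {ω | t ≤ α₂₀ * ε₀ ω + Y₂ ω} := by
      ext ω
      rw [hW₂]
      simp only [hY₂def, mem_setOf_eq]
      constructor <;> intro <;> linarith
    rw [hseteq]; exact ht
  
  -- positivity of gaussian tails
  have hposX₁ : ∀ z : ℝ, ℙ {ω | z < X₁ ω} ≠ 0 := by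
    intro z
    have he : ℙ {ω | z < X₁ ω} = gaussianReal 0 1 (Ioi z) := by
      rw [← hlawX₁, Measure.map_apply hX₁ measurableSet_Ioi]; rfl
    rw [he]
    exact UTD.gaussianReal_pos measurableSet_Ioi (by simp [Real.volume_Ioi])
  have hposZ₂ : ∀ z : ℝ, ℙ {ω | z < Z₂ ω} ≠ 0 := by
    intro z
    set M : ℝ := (z+1)/sq with hMdef
    have hsubset : X₁ ⁻¹' (Ioo (-1) 1) ∩ X₂ ⁻¹' (Ioi M) ⊆ {ω | z < Z₂ ω} := by
      rintro ω ⟨h1, h2⟩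
      simp only [mem_preimage, mem_Ioo] at h1
      simp only [mem_preimage, mem_Ioi] at h2
      simp only [mem_setOf_eq, hZ₂]
      have hA : -1 < ρ * X₁ ω := by
        nlinarith [mul_pos (by linarith : (0:ℝ) < 1+ρ) (by linarith : (0:ℝ) < 1 + X₁ ω),
          mul_pos (by linarith : (0:ℝ) < 1-ρ) (by linarith : (0:ℝ) < 1 - X₁ ω)]
      have hsM : sq * M = z + 1 := by rw [hMdef]; field_simp
      have hB : z + 1 < sq * X₂ ω := by
        have := mul_lt_mul_of_pos_left h2 hsqpos
        rw [hsM] at this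
        exact this
      linarith
    intro h0
    have hz : ℙ (X₁ ⁻¹' (Ioo (-1) 1) ∩ X₂ ⁻¹' (Ioi M)) = 0 :=
      le_antisymm (le_trans (measure_mono hsubset) h0.le) zero_le
    have hprod := (indepFun_iff_measure_inter_preimage_eq_mul.mp hindX12) (Ioo (-1) 1) (Ioi M)
      measurableSet_Ioo measurableSet_Ioi
    rw [hprod] at hz
    rcases mul_eq_zero.mp hz with hc | hc
    · have he : ℙ (X₁ ⁻¹' (Ioo (-1) 1)) = gaussianReal 0 1 (Ioo (-1) 1) := by
        rw [← hlawX₁, Measure.map_apply hX₁ measurableSet_Ioo]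
      rw [he] at hc
      exact UTD.gaussianReal_pos measurableSet_Ioo (by simp [Real.volume_Ioo]) hc
    · have he : ℙ (X₂ ⁻¹' (Ioi M)) = gaussianReal 0 1 (Ioi M) := by
        rw [← hlawX₂, Measure.map_apply hX₂ measurableSet_Ioi]
      rw [he] at hc
      exact UTD.gaussianReal_pos measurableSet_Ioi (by simp [Real.volume_Ioi]) hc
  -- cdfs of W₁, W₂ stay below 1
  have hlt1W₁ : ∀ z : ℝ, (ℙ {ω | W₁ ω ≤ z}).toReal < 1 := by
    intro z
    have hsub : {ω | z < X₁ ω} ⊆ {ω | z < W₁ ω} := by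
      intro ω hω
      simp only [mem_setOf_eq] at hω ⊢
      rw [hW₁, hZ₁]
      show z < X₁ ω + α₁₀ * ε₀ ω + α₁ * ε₁ ω
      have h0 := mul_nonneg hα₁₀.le (hnn₀ ω)
      have h1 := mul_nonneg hα₁ (hnn₁ ω)
      linarith
    have hne : ℙ {ω | z < W₁ ω} ≠ 0 := by
      intro h
      exact hposX₁ z (le_antisymm (le_trans (measure_mono hsub) h.le) zero_le)
    have h1 : 0 < (ℙ {ω | z < W₁ ω}).toReal := ENNReal.toReal_pos hne (measure_ne_top _ _)
    have h2 := UTD.compl_eq W₁ hW₁m z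
    linarith
  have hlt1W₂ : ∀ z : ℝ, (ℙ {ω | W₂ ω ≤ z}).toReal < 1 := by
    intro z
    have hsub : {ω | z < Z₂ ω} ⊆ {ω | z < W₂ ω} := by
      intro ω hω
      simp only [mem_setOf_eq] at hω ⊢
      rw [hW₂]
      show z < Z₂ ω + α₂₀ * ε₀ ω + α₂ * ε₂ ω
      have h0 := mul_nonneg hα₂₀.le (hnn₀ ω)
      have h1 := mul_nonneg hα₂ (hnn₂ ω)
      linarith
    have hne : ℙ {ω | z < W₂ ω} ≠ 0 := by
      intro h
      exact hposZ₂ z (le_antisymm (le_trans (measure_mono hsub) h.le) zero_le)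
    have h1 : 0 < (ℙ {ω | z < W₂ ω}).toReal := ENNReal.toReal_pos hne (measure_ne_top _ _)
    have h2 := UTD.compl_eq W₂ hW₂m z
    linarith
  -- quantile functions tend to infinity
  have hQt₁ : Tendsto (fun q : ℝ => UTD.Qtl W₁ (1-q)) (nhdsWithin 0 (Set.Ioi 0)) atTop :=
    UTD.Qtl_tendsto_atTop hW₁m hlt1W₁
  have hQt₂ : Tendsto (fun q : ℝ => UTD.Qtl W₂ (1-q)) (nhdsWithin 0 (Set.Ioi 0)) atTop :=
    UTD.Qtl_tendsto_atTop hW₂m hlt1W₂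
  -- final convergence
  rw [Metric.tendsto_nhds]
  intro ε hε
  set η : ℝ := min (ε/8) (1/2) with hηdef
  have hηpos : 0 < η := lt_min (by linarith) (by norm_num)
  have hηhalf : η ≤ 1/2 := min_le_right _ _
  have hη8 : η ≤ ε/8 := min_le_left _ _
  -- choose m ≥ 0 controlling lower tails of Y₁, Y₂
  have hm1 : Tendsto (fun m : ℝ => (ℙ {ω | Y₁ ω ≤ -m}).toReal) atTop (nhds 0) := by
    have h := (UTD.cdf_tendsto_zero (Ω := Ω) hY₁m).comp tendsto_neg_atTop_atBot
    simpa [Function.comp_def] using h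
  have hm2 : Tendsto (fun m : ℝ => (ℙ {ω | Y₂ ω ≤ -m}).toReal) atTop (nhds 0) := by
    have h := (UTD.cdf_tendsto_zero (Ω := Ω) hY₂m).comp tendsto_neg_atTop_atBot
    simpa [Function.comp_def] using h
  obtain ⟨m, ⟨hmY₁, hmY₂⟩, hm0⟩ :=
    (((hm1.eventually_le_const (by positivity : (0:ℝ) < η/2)).and
      (hm2.eventually_le_const (by positivity : (0:ℝ) < η/2))).and
      (eventually_ge_atTop (0:ℝ))).exists
  set αmin : ℝ := min α₁₀ α₂₀ with hαmindef
  have hαminpos : 0 < αmin := lt_min hα₁₀ hα₂₀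
  set m' : ℝ := (m+1)/αmin with hm'def
  have hm'nonneg : 0 ≤ m' := by positivity
  have hαm'₁ : m + 1 ≤ α₁₀ * m' := by
    have h1 : αmin * m' = m + 1 := by rw [hm'def]; field_simp
    have h2 := mul_le_mul_of_nonneg_right (min_le_left α₁₀ α₂₀) hm'nonneg
    linarith
  have hαm'₂ : m + 1 ≤ α₂₀ * m' := by
    have h1 : αmin * m' = m + 1 := by rw [hm'def]; field_simp
    have h2 := mul_le_mul_of_nonneg_right (min_le_right α₁₀ α₂₀) hm'nonneg
    linarith
  -- the good event G
  set G : Set Ω := {ω | -m < Y₁ ω} ∩ {ω | -m < Y₂ ω} with hGdef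
  have hGmeas : MeasurableSet G :=
    (measurableSet_lt measurable_const hY₁m).inter (measurableSet_lt measurable_const hY₂m)
  have hGbound : 1 - η ≤ (ℙ G).toReal := by
    have hcompl : Gᶜ = {ω | Y₁ ω ≤ -m} ∪ {ω | Y₂ ω ≤ -m} := by
      rw [hGdef, Set.compl_inter]
      congr 1 <;> · ext ω; simp [not_lt]
    have hle : (ℙ Gᶜ).toReal ≤ η := by
      rw [hcompl]
      calc (ℙ ({ω | Y₁ ω ≤ -m} ∪ {ω | Y₂ ω ≤ -m})).toReal
          ≤ ((ℙ {ω | Y₁ ω ≤ -m}) + ℙ {ω | Y₂ ω ≤ -m}).toReal :=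
            ENNReal.toReal_mono (by finiteness) (measure_union_le _ _)
        _ = (ℙ {ω | Y₁ ω ≤ -m}).toReal + (ℙ {ω | Y₂ ω ≤ -m}).toReal :=
            ENNReal.toReal_add (by finiteness) (by finiteness)
        _ ≤ η/2 + η/2 := add_le_add hmY₁ hmY₂
        _ = η := by ring
    have heq : (ℙ Gᶜ).toReal = 1 - (ℙ G).toReal := by
      rw [prob_compl_eq_one_sub hGmeas,
        ENNReal.toReal_sub_of_le prob_le_one ENNReal.one_ne_top]
      simp
    linarith
  -- thresholds
  obtain ⟨T₁, hT₁⟩ := eventually_atTop.1 (hup₁ η hηpos)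
  obtain ⟨T₂, hT₂⟩ := eventually_atTop.1 (hup₂ η hηpos)
  have hlift : ∀ᶠ c : ℝ in atTop, (1-η) * Fbar c ≤ Fbar (c + m') := by
    have h1 := hlong m' hm'nonneg
    have hcomp : Tendsto (fun c : ℝ => c + m') atTop atTop :=
      tendsto_atTop_add_const_right _ _ tendsto_id
    have honeineq : (1:ℝ) < 1/(1-η) := by
      rw [lt_div_iff₀ (by linarith : (0:ℝ) < 1-η)]
      linarith
    have h2 := hcomp.eventually (h1.eventually_le_const honeineq)
    filter_upwards [h2] with c hc
    have he : c + m' - m' = c := by ring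
    rw [he] at hc
    rw [div_le_iff₀ (hFbarpos _)] at hc
    have h1η : (0:ℝ) < 1 - η := by linarith
    have hmul := mul_le_mul_of_nonneg_left hc h1η.le
    have hid : (1-η) * (1/(1-η) * Fbar (c + m')) = Fbar (c + m') := by
      field_simp
    rw [hid] at hmul
    exact hmul
  obtain ⟨T₃, hT₃⟩ := eventually_atTop.1 hlift
  -- eventual conditions in q
  filter_upwards [hQt₁.eventually (eventually_ge_atTop T₁),
    hQt₂.eventually (eventually_ge_atTop T₂),
    hQt₁.eventually (eventually_ge_atTop (α₁₀ * T₃)),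
    Ioo_mem_nhdsGT_of_mem (by constructor <;> norm_num : (0:ℝ) ∈ Set.Ico 0 (1/2)),
    self_mem_nhdsWithin] with q hq1 hq2 hq3 hqI hq0
  have hqpos : 0 < q := hq0
  have hqhalf : q < 1/2 := hqI.2
  have hp0 : 0 < 1 - q := by linarith
  have hp1 : 1 - q < 1 := by linarith
  set t₁ : ℝ := UTD.Qtl W₁ (1-q) with ht₁def
  set t₂ : ℝ := UTD.Qtl W₂ (1-q) with ht₂def
  set c : ℝ := max (t₁/α₁₀) (t₂/α₂₀) with hcdef
  have hQ₁v : Q₁ (1-q) = t₁ := hQ₁ (1-q)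
  have hQ₂v : Q₂ (1-q) = t₂ := hQ₂ (1-q)
  have hgoalset : {ω | Q₁ (1-q) < W₁ ω ∧ Q₂ (1-q) < W₂ ω}
      = {ω | t₁ < W₁ ω} ∩ {ω | t₂ < W₂ ω} := by
    ext ω
    simp only [mem_setOf_eq, mem_inter_iff, hQ₁v, hQ₂v]
  set N : ℝ := (ℙ ({ω | t₁ < W₁ ω} ∩ {ω | t₂ < W₂ ω})).toReal with hNdef
  -- upper bound : N ≤ q
  have hcdf₁ : 1 - q ≤ (ℙ {ω | W₁ ω ≤ t₁}).toReal := UTD.Qtl_cdf_ge hW₁m hp0 hp1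
  have hNq : N ≤ q := by
    have h1 : N ≤ (ℙ {ω | t₁ < W₁ ω}).toReal :=
      ENNReal.toReal_mono (measure_ne_top _ _) (measure_mono Set.inter_subset_left)
    have h2 := UTD.compl_eq W₁ hW₁m t₁
    linarith
  -- lower bound pieces
  have hql₁ : q ≤ (ℙ {ω | t₁ ≤ W₁ ω}).toReal := by
    have h := UTD.Qtl_tail_ge hW₁m hp0 hp1
    have he : 1 - (1-q) = q := by ring
    rw [he] at h
    exact h
  have hql₂ : q ≤ (ℙ {ω | t₂ ≤ W₂ ω}).toReal := by
    have h := UTD.Qtl_tail_ge hW₂m hp0 hp1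
    have he : 1 - (1-q) = q := by ring
    rw [he] at h
    exact h
  have hqb₁ : q ≤ (1+η) * Fbar (t₁/α₁₀) := le_trans hql₁ (hT₁ t₁ hq1)
  have hqb₂ : q ≤ (1+η) * Fbar (t₂/α₂₀) := le_trans hql₂ (hT₂ t₂ hq2)
  have hqc : q ≤ (1+η) * Fbar c := by
    rcases max_choice (t₁/α₁₀) (t₂/α₂₀) with h | h
    · rw [hcdef, h]; exact hqb₁
    · rw [hcdef, h]; exact hqb₂
  have hcT₃ : T₃ ≤ c := by
    have h1 : T₃ ≤ t₁/α₁₀ := by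
      rw [le_div_iff₀ hα₁₀]
      calc T₃ * α₁₀ = α₁₀ * T₃ := by ring
        _ ≤ t₁ := hq3
    exact le_trans h1 (le_max_left _ _)
  have hliftc : (1-η) * Fbar c ≤ Fbar (c + m') := hT₃ c hcT₃
  -- the joint event inclusion
  have hJsub : {ω | c + m' < ε₀ ω} ∩ G ⊆ {ω | t₁ < W₁ ω} ∩ {ω | t₂ < W₂ ω} := by
    rintro ω ⟨hεω, hG1, hG2⟩
    simp only [mem_setOf_eq] at hεω hG1 hG2
    have hc₁ : t₁ ≤ α₁₀ * c := by
      have := mul_le_mul_of_nonneg_left (le_max_left (t₁/α₁₀) (t₂/α₂₀)) hα₁₀.le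
      rw [mul_div_cancel₀ _ hα₁₀.ne'] at this
      rw [hcdef]
      exact this
    have hc₂ : t₂ ≤ α₂₀ * c := by
      have := mul_le_mul_of_nonneg_left (le_max_right (t₁/α₁₀) (t₂/α₂₀)) hα₂₀.le
      rw [mul_div_cancel₀ _ hα₂₀.ne'] at this
      rw [hcdef]
      exact this
    have hw₁ : W₁ ω = α₁₀ * ε₀ ω + Y₁ ω := by
      rw [hW₁]; simp only [hY₁def]; ring
    have hw₂ : W₂ ω = α₂₀ * ε₀ ω + Y₂ ω := by
      rw [hW₂]; simp only [hY₂def]; ring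
    have hm₁ : α₁₀ * (c + m') < α₁₀ * ε₀ ω := mul_lt_mul_of_pos_left hεω hα₁₀
    have hm₂ : α₂₀ * (c + m') < α₂₀ * ε₀ ω := mul_lt_mul_of_pos_left hεω hα₂₀
    have hexp₁ : α₁₀ * (c + m') = α₁₀ * c + α₁₀ * m' := by ring
    have hexp₂ : α₂₀ * (c + m') = α₂₀ * c + α₂₀ * m' := by ring
    constructor
    · simp only [mem_setOf_eq, hw₁]
      linarith
    · simp only [mem_setOf_eq, hw₂]
      linarith
  -- product formula for the joint event
  have hJprod : ℙ ({ω | c + m' < ε₀ ω} ∩ G) = ℙ {ω | c + m' < ε₀ ω} * ℙ G := by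
    have hpre1 : ε₀ ⁻¹' (Ioi (c+m')) = {ω | c + m' < ε₀ ω} := rfl
    have hpre2 : (fun ω => (Y₁ ω, Y₂ ω)) ⁻¹' ((Ioi (-m)) ×ˢ (Ioi (-m))) = G := by
      ext ω
      simp [hGdef, Set.mem_prod]
    have h := (indepFun_iff_measure_inter_preimage_eq_mul.mp hindE_pair)
      (Ioi (c+m')) ((Ioi (-m)) ×ˢ (Ioi (-m))) measurableSet_Ioi
      (measurableSet_Ioi.prod measurableSet_Ioi)
    rw [hpre1, hpre2] at h
    exact h
  have hNlow : (1-η) * ((1-η) * (q / (1+η))) ≤ N := by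
    have h1 : (ℙ ({ω | c + m' < ε₀ ω} ∩ G)).toReal ≤ N :=
      ENNReal.toReal_mono (measure_ne_top _ _) (measure_mono hJsub)
    have h2 : (ℙ ({ω | c + m' < ε₀ ω} ∩ G)).toReal = Fbar (c+m') * (ℙ G).toReal := by
      rw [hJprod, ENNReal.toReal_mul, ← hFs]
    have h3 : q / (1+η) ≤ Fbar c := by
      rw [div_le_iff₀ (by linarith : (0:ℝ) < 1+η)]
      linarith [hqc]
    have h1η : (0:ℝ) < 1 - η := by linarith
    have hqdivnn : 0 ≤ q / (1+η) := by positivity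
    calc (1-η) * ((1-η) * (q / (1+η)))
        ≤ (1-η) * ((1-η) * Fbar c) := by
          apply mul_le_mul_of_nonneg_left _ h1η.le
          exact mul_le_mul_of_nonneg_left h3 h1η.le
      _ = ((1-η) * Fbar c) * (1-η) := by ring
      _ ≤ Fbar (c+m') * (1-η) := by
          apply mul_le_mul_of_nonneg_right hliftc h1η.le
      _ ≤ Fbar (c+m') * (ℙ G).toReal := by
          apply mul_le_mul_of_nonneg_left hGbound (hFbarpos _).le
      _ = (ℙ ({ω | c + m' < ε₀ ω} ∩ G)).toReal := h2.symm
      _ ≤ N := h1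
  -- conclude
  rw [hgoalset, ← hNdef]
  have hratio_le : N / q ≤ 1 := by
    rw [div_le_one hqpos]
    exact hNq
  have hratio_ge : 1 - ε/2 ≤ N / q := by
    rw [le_div_iff₀ hqpos]
    have hfactor : (1-4*η) * (1+η) ≤ (1-η)*(1-η) := by
      have hid3 : (1-η)*(1-η) - (1-4*η)*(1+η) = η + 5*η^2 := by ring
      have h5 : (0:ℝ) ≤ η + 5*η^2 := by positivity
      linarith
    have hqdivnn : (0:ℝ) ≤ q / (1+η) := by positivity
    have hstep : (1 - 4*η) * q ≤ (1-η) * ((1-η) * (q / (1+η))) := by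
      have hid : (1-4*η) * q = ((1-4*η)*(1+η)) * (q/(1+η)) := by
        field_simp
      have hid2 : (1-η) * ((1-η) * (q / (1+η))) = ((1-η)*(1-η)) * (q/(1+η)) := by ring
      rw [hid, hid2]
      exact mul_le_mul_of_nonneg_right hfactor hqdivnn
    have hεη : (1 - ε/2) * q ≤ (1 - 4*η) * q := by
      apply mul_le_mul_of_nonneg_right _ hqpos.le
      linarith
    linarith [hNlow, hstep]
  rw [Real.dist_eq]
  have habs : |N / q - 1| ≤ ε/2 := by
    rw [abs_le]
    constructor <;> linarith
  linarith
end
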